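/- arXiv:0812.4147 — 8 statements merged into one kernel-verified Lean document; each statement's English description precedes it below -/
import Mathlib

section
/- For every finite simple graph G and every vertex v of G, Q(G;x,y) = Q(G−v;x,y) + x(y−1)·Q(G−N[v];x,y) + x·Q(G/v;x,y). -/
open Finset
open scoped Classical

/-- The number of connected components of a graph. -/
noncomputable def numComponents {V : Type*} (G : SimpleGraph V) : ℕ :=
  Nat.card G.ConnectedComponent

/-- The subgraph component polynomial `Q(G;x,y) = ∑_{A ⊆ V} x^|A| y^{k(G[A])}`. -/
noncomputable def Q {V : Type*} [Fintype V] (G : SimpleGraph V) (x y : ℝ) : ℝ :=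
  ∑ A : Finset V, x ^ A.card * y ^ numComponents (G.induce (A : Set V))
/-- Vertex contraction: delete the vertex `v` and add edges between all pairs of
previously non-adjacent neighbors of `v`. -/
def contractVertex {V : Type*} (G : SimpleGraph V) (v : V) :
    SimpleGraph {u : V // u ≠ v} where
  Adj a b := a ≠ b ∧ (G.Adj a b ∨ (G.Adj a v ∧ G.Adj b v))
  symm := by
    constructor
    rintro a b ⟨hne, h | ⟨h1, h2⟩⟩
    · exact ⟨hne.symm, Or.inl h.symm⟩
    · exact ⟨hne.symm, Or.inr ⟨h2, h1⟩⟩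
  loopless := by constructor; rintro a ⟨h, -⟩; exact h rfl

namespace SCPaux

variable {V : Type*}

/-- Lift a function constant on adjacent vertices to connected components. -/
def liftAdj {β : Sort*} (G : SimpleGraph V) (f : V → β)
    (h : ∀ v w, G.Adj v w → f v = f w) : G.ConnectedComponent → β :=
  Quot.lift f fun v w hr => by
    obtain ⟨p⟩ := hr
    induction p with
    | nil => rfl
    | cons a _ ih => exact (h _ _ a).trans ih

@[simp] lemma liftAdj_mk {β : Sort*} (G : SimpleGraph V) (f : V → β)
    (h : ∀ v w, G.Adj v w → f v = f w) (v : V) :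
    liftAdj G f h (G.connectedComponentMk v) = f v := rfl

lemma numComponents_congr {α β : Type*} {G : SimpleGraph α} {H : SimpleGraph β}
    (e : G ≃g H) : numComponents G = numComponents H :=
  Nat.card_congr e.connectedComponentEquiv

/-- Double induce iso. -/
noncomputable def induceInduceIso (G : SimpleGraph V) (S : Set V) (C : Finset S) :
    (G.induce S).induce (C : Set S) ≃g
      G.induce ((C.map (Function.Embedding.subtype _) : Finset V) : Set V) where
  toFun w := ⟨w.1.1, by
    simp only [Finset.coe_map, Set.mem_image, Finset.mem_coe]
    exact ⟨w.1, w.2, rfl⟩⟩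
  invFun u := ⟨⟨u.1, by
      obtain ⟨c, hc, h⟩ := Finset.mem_map.mp (Finset.mem_coe.mp u.2)
      exact h ▸ c.2⟩, by
      obtain ⟨c, hc, h⟩ := Finset.mem_map.mp (Finset.mem_coe.mp u.2)
      exact Set.mem_of_eq_of_mem (Subtype.ext h.symm) hc⟩
  left_inv w := Subtype.ext (Subtype.ext rfl)
  right_inv u := Subtype.ext rfl
  map_rel_iff' := Iff.rfl


/-- Adding an isolated vertex increases the component count by one. -/
lemma numComponents_insert_isolated [Finite V] (G : SimpleGraph V) (v : V) (A : Set V)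
    (hv : v ∉ A) (h : ∀ w ∈ A, ¬ G.Adj v w) :
    numComponents (G.induce (insert v A)) = numComponents (G.induce A) + 1 := by
  classical
  set H1 := G.induce (insert v A) with hH1
  set H0 := G.induce A with hH0
  have hne : ∀ u : ↥(insert v A), u.1 ≠ v → u.1 ∈ A := fun u hu =>
    (Set.mem_insert_iff.mp u.2).resolve_left hu
  let f : H1.ConnectedComponent → H0.ConnectedComponent ⊕ Unit :=
    liftAdj H1 (fun u => if h' : u.1 = v then Sum.inr () else
        Sum.inl (H0.connectedComponentMk ⟨u.1, hne u h'⟩)) (by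
      intro a b hab
      have hGab : G.Adj a.1 b.1 := hab
      have ha : a.1 ≠ v := by
        intro hav
        rw [hav] at hGab
        rcases Set.mem_insert_iff.mp b.2 with hb | hb
        · exact G.loopless.irrefl _ (hb ▸ hGab)
        · exact h _ hb hGab
      have hb : b.1 ≠ v := by
        intro hbv
        rw [hbv] at hGab
        rcases Set.mem_insert_iff.mp a.2 with ha' | ha'
        · exact G.loopless.irrefl _ (ha' ▸ hGab.symm)
        · exact h _ ha' hGab.symm
      simp only [dif_neg ha, dif_neg hb]
      exact congrArg Sum.inl (SimpleGraph.ConnectedComponent.sound (SimpleGraph.Adj.reachable hGab)))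
  have hfmk : ∀ u : ↥(insert v A), f (H1.connectedComponentMk u)
      = if h' : u.1 = v then Sum.inr () else
          Sum.inl (H0.connectedComponentMk ⟨u.1, hne u h'⟩) := fun u => rfl
  let φ : H0 →g H1 := ⟨fun u => ⟨u.1, Set.mem_insert_of_mem _ u.2⟩, fun hadj => hadj⟩
  let g : H0.ConnectedComponent ⊕ Unit → H1.ConnectedComponent :=
    Sum.elim (SimpleGraph.ConnectedComponent.map φ)
      (fun _ => H1.connectedComponentMk ⟨v, Set.mem_insert _ _⟩)
  have hgl : ∀ w : ↥A, g (Sum.inl (H0.connectedComponentMk w))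
      = H1.connectedComponentMk (φ w) := fun w => rfl
  have hgr : g (Sum.inr ()) = H1.connectedComponentMk ⟨v, Set.mem_insert _ _⟩ := rfl
  have hfg : ∀ c, g (f c) = c := by
    refine SimpleGraph.ConnectedComponent.ind fun u => ?_
    rw [hfmk]
    by_cases h' : u.1 = v
    · rw [dif_pos h', hgr]
      exact congrArg _ (Subtype.ext h'.symm)
    · rw [dif_neg h', hgl]
      rfl
  have hgf : ∀ c, f (g c) = c := by
    rintro (c | ⟨⟩)
    · refine SimpleGraph.ConnectedComponent.ind (fun w => ?_) c
      rw [hgl, hfmk]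
      have hwv : (φ w).1 ≠ v := fun e => hv (e ▸ w.2)
      rw [dif_neg hwv]
      exact congrArg Sum.inl (congrArg _ (Subtype.ext rfl))
    · rw [hgr, hfmk, dif_pos rfl]
  have e : H1.ConnectedComponent ≃ H0.ConnectedComponent ⊕ Unit := ⟨f, g, hfg, hgf⟩
  rw [numComponents, numComponents, Nat.card_congr e, Nat.card_sum]
  simp

/-- If no vertex of `B` is adjacent to `v`, the contracted graph induced on `B` is
isomorphic to the original graph induced on `B` (viewed in `V`). -/
noncomputable def contractIsoOfNoNeighbor (G : SimpleGraph V) (v : V)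
    (B : Finset {u : V // u ≠ v}) (h : ∀ w ∈ B, ¬ G.Adj v w.1) :
    (contractVertex G v).induce (B : Set {u : V // u ≠ v}) ≃g
      G.induce ((B.map (Function.Embedding.subtype _) : Finset V) : Set V) where
  toFun w := ⟨w.1.1, by
    simp only [Finset.coe_map, Set.mem_image, Finset.mem_coe]
    exact ⟨w.1, w.2, rfl⟩⟩
  invFun u := ⟨⟨u.1, by
      obtain ⟨c, hc, hh⟩ := Finset.mem_map.mp (Finset.mem_coe.mp u.2)
      exact hh ▸ c.2⟩, by
      obtain ⟨c, hc, hh⟩ := Finset.mem_map.mp (Finset.mem_coe.mp u.2)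
      exact Set.mem_of_eq_of_mem (Subtype.ext hh.symm) hc⟩
  left_inv w := Subtype.ext (Subtype.ext rfl)
  right_inv u := Subtype.ext rfl
  map_rel_iff' := by
    intro a b
    constructor
    · intro hab
      have hG : G.Adj a.1.1 b.1.1 := hab
      exact (⟨fun e => hG.ne (congrArg (fun (z : {u : V // u ≠ v}) => z.1) e), Or.inl hG⟩ :
        (contractVertex G v).Adj a.1 b.1)
    · intro hab
      have hab' : (contractVertex G v).Adj a.1 b.1 := hab
      rcases hab'.2 with h' | ⟨h1, h2⟩
      · exact h'
      · exact absurd h1.symm (h a.1 a.2)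

/-- If some vertex of `B` is adjacent to `v`, contracting matches inserting `v`. -/
lemma numComponents_contract [Finite V] (G : SimpleGraph V) (v : V)
    (B : Finset {u : V // u ≠ v}) (w0 : {u : V // u ≠ v}) (hw0 : w0 ∈ B)
    (hadj : G.Adj v w0.1) :
    numComponents (G.induce (insert v ((B.map (Function.Embedding.subtype _) : Finset V) : Set V)))
      = numComponents ((contractVertex G v).induce (B : Set {u : V // u ≠ v})) := by
  classical
  set A : Set V := ((B.map (Function.Embedding.subtype _) : Finset V) : Set V) with hA
  set H1 := G.induce (insert v A) with hH1
  set H2 := (contractVertex G v).induce (B : Set {u : V // u ≠ v}) with hH2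
  have memA : ∀ w : {u : V // u ≠ v}, w ∈ B → w.1 ∈ A := by
    intro w hw
    simp only [hA, Finset.coe_map, Set.mem_image, Finset.mem_coe]
    exact ⟨w, hw, rfl⟩
  have memB : ∀ u : V, u ∈ A → ∀ hu : u ≠ v, (⟨u, hu⟩ : {u : V // u ≠ v}) ∈ B := by
    intro u hu hne
    simp only [hA, Finset.coe_map, Set.mem_image, Finset.mem_coe] at hu
    obtain ⟨c, hc, hh⟩ := hu
    exact Set.mem_of_eq_of_mem (Subtype.ext hh.symm) hc
  -- the distinguished vertex
  let vv : ↥(insert v A) := ⟨v, Set.mem_insert _ _⟩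
  let φ : ↥(B : Set {u : V // u ≠ v}) → ↥(insert v A) :=
    fun w => ⟨w.1.1, Set.mem_insert_of_mem _ (memA w.1 w.2)⟩
  let f : H2.ConnectedComponent → H1.ConnectedComponent :=
    liftAdj H2 (fun w => H1.connectedComponentMk (φ w)) (by
      intro a b hab
      obtain ⟨hne', hor⟩ := (hab : (contractVertex G v).Adj a.1 b.1)
      rcases hor with h' | ⟨h1, h2⟩
      · exact SimpleGraph.ConnectedComponent.sound (SimpleGraph.Adj.reachable h')
      · have r1 : H1.Reachable (φ a) vv := SimpleGraph.Adj.reachable h1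
        have r2 : H1.Reachable vv (φ b) := SimpleGraph.Adj.reachable h2.symm
        exact SimpleGraph.ConnectedComponent.sound (r1.trans r2))
  have hfmk : ∀ w, f (H2.connectedComponentMk w) = H1.connectedComponentMk (φ w) :=
    fun w => rfl
  let ψ : ↥(insert v A) → H2.ConnectedComponent := fun u =>
    if h' : u.1 = v then H2.connectedComponentMk ⟨w0, hw0⟩
    else H2.connectedComponentMk
      ⟨⟨u.1, h'⟩, memB u.1 ((Set.mem_insert_iff.mp u.2).resolve_left h') h'⟩
  have hψ : ∀ u u', H1.Adj u u' → ψ u = ψ u' := by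
    intro a b hab
    have hGab : G.Adj a.1 b.1 := hab
    have key : ∀ (p q : ↥(insert v A)) (hp : p.1 = v) (hq : q.1 ≠ v),
        G.Adj p.1 q.1 → ψ p = ψ q := by
      intro p q hp hq hpq
      have hqB := memB q.1 ((Set.mem_insert_iff.mp q.2).resolve_left hq) hq
      simp only [ψ, dif_pos hp, dif_neg hq]
      by_cases he : w0 = (⟨q.1, hq⟩ : {u : V // u ≠ v})
      · exact congrArg _ (Subtype.ext he)
      · refine SimpleGraph.ConnectedComponent.sound (SimpleGraph.Adj.reachable ?_)
        show (contractVertex G v).Adj w0 ⟨q.1, hq⟩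
        exact ⟨he, Or.inr ⟨hadj.symm, (hp ▸ hpq).symm⟩⟩
    by_cases hav : a.1 = v
    · have hbv : b.1 ≠ v := by
        intro hbv
        rw [hav, hbv] at hGab
        exact G.loopless.irrefl _ hGab
      exact key a b hav hbv hGab
    · by_cases hbv : b.1 = v
      · exact (key b a hbv hav hGab.symm).symm
      · have haB := memB a.1 ((Set.mem_insert_iff.mp a.2).resolve_left hav) hav
        have hbB := memB b.1 ((Set.mem_insert_iff.mp b.2).resolve_left hbv) hbv
        simp only [ψ, dif_neg hav, dif_neg hbv]
        refine SimpleGraph.ConnectedComponent.sound (SimpleGraph.Adj.reachable ?_)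
        show (contractVertex G v).Adj ⟨a.1, hav⟩ ⟨b.1, hbv⟩
        exact ⟨fun e => hGab.ne (congrArg (fun (z : {u : V // u ≠ v}) => z.1) e), Or.inl hGab⟩
  let g : H1.ConnectedComponent → H2.ConnectedComponent := liftAdj H1 ψ hψ
  have hgmk : ∀ u, g (H1.connectedComponentMk u) = ψ u := fun u => rfl
  have hgf : ∀ c, g (f c) = c := by
    refine SimpleGraph.ConnectedComponent.ind fun w => ?_
    rw [hfmk, hgmk]
    have : (φ w).1 ≠ v := w.1.2
    simp only [ψ, dif_neg this]
    rfl
  have hfg : ∀ c, f (g c) = c := by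
    refine SimpleGraph.ConnectedComponent.ind fun u => ?_
    rw [hgmk]
    by_cases h' : u.1 = v
    · simp only [ψ, dif_pos h']
      rw [hfmk]
      have hr : H1.Reachable (φ ⟨w0, hw0⟩) vv := SimpleGraph.Adj.reachable hadj.symm
      have : H1.connectedComponentMk vv = H1.connectedComponentMk u :=
        congrArg _ (Subtype.ext h'.symm)
      exact (SimpleGraph.ConnectedComponent.sound hr).trans this
    · simp only [ψ, dif_neg h']
      rw [hfmk]
  exact Nat.card_congr ⟨g, f, hfg, hgf⟩

end SCPaux

theorem stmt4 {V : Type*} [Fintype V] (G : SimpleGraph V) (v : V) (x y : ℝ) :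
    Q G x y =
      Q (G.induce {u : V | u ≠ v}) x y
        + x * (y - 1) * Q (G.induce ((insert v (G.neighborSet v))ᶜ)) x y
        + x * Q (contractVertex G v) x y := by
  classical
  set emb : {u : V // u ≠ v} ↪ V := Function.Embedding.subtype _ with hembdef
  have hvnot : ∀ B : Finset {u : V // u ≠ v}, v ∉ B.map emb := by
    intro B hv
    obtain ⟨c, hc, hh⟩ := Finset.mem_map.mp hv
    exact c.2 hh
  have hsubB : ∀ B : Finset {u : V // u ≠ v}, (B.map emb).subtype (· ≠ v) = B := by
    intro B
    ext w
    simp only [Finset.mem_subtype, Finset.mem_map]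
    constructor
    · rintro ⟨a, ha, haa⟩
      exact (Subtype.ext haa : a = w) ▸ ha
    · intro hw
      exact ⟨w, hw, rfl⟩
  -- Step 1 : split `Q G` according to membership of `v`
  have h1 : Q G x y = ∑ B : Finset {u : V // u ≠ v},
      (x ^ B.card * y ^ numComponents (G.induce ((B.map emb : Finset V) : Set V))
        + x ^ (B.card + 1) *
          y ^ numComponents (G.induce ((insert v (B.map emb) : Finset V) : Set V))) := by
    rw [Q, ← Finset.sum_filter_add_sum_filter_not Finset.univ (fun A : Finset V => v ∈ A),
      Finset.sum_add_distrib]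
    have e1 : ∑ B : Finset {u : V // u ≠ v},
        x ^ B.card * y ^ numComponents (G.induce ((B.map emb : Finset V) : Set V))
        = ∑ A ∈ Finset.univ.filter (fun A : Finset V => ¬ v ∈ A),
            x ^ A.card * y ^ numComponents (G.induce (A : Set V)) := by
      refine Finset.sum_nbij' (fun B => B.map emb) (fun A => A.subtype (· ≠ v))
        ?_ ?_ ?_ ?_ ?_
      · intro B _
        exact Finset.mem_filter.mpr ⟨Finset.mem_univ _, hvnot B⟩
      · intro A _
        exact Finset.mem_univ _
      · intro B _
        exact hsubB B
      · intro A hA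
        exact Finset.subtype_map_of_mem fun u hu hv =>
          (Finset.mem_filter.mp hA).2 (hv ▸ hu)
      · intro B _
        rw [Finset.card_map]
    have e2 : ∑ B : Finset {u : V // u ≠ v},
        x ^ (B.card + 1) *
          y ^ numComponents (G.induce ((insert v (B.map emb) : Finset V) : Set V))
        = ∑ A ∈ Finset.univ.filter (fun A : Finset V => v ∈ A),
            x ^ A.card * y ^ numComponents (G.induce (A : Set V)) := by
      refine Finset.sum_nbij' (fun B => insert v (B.map emb))
        (fun A => (A.erase v).subtype (· ≠ v)) ?_ ?_ ?_ ?_ ?_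
      · intro B _
        exact Finset.mem_filter.mpr ⟨Finset.mem_univ _, Finset.mem_insert_self _ _⟩
      · intro A _
        exact Finset.mem_univ _
      · intro B _
        beta_reduce
        rw [Finset.erase_insert (hvnot B)]
        exact hsubB B
      · intro A hA
        have h1 : ((A.erase v).subtype (· ≠ v)).map emb = A.erase v :=
          Finset.subtype_map_of_mem fun u hu => (Finset.mem_erase.mp hu).1
        beta_reduce
        rw [h1, Finset.insert_erase (Finset.mem_filter.mp hA).2]
      · intro B _
        rw [Finset.card_insert_of_notMem (hvnot B), Finset.card_map]
    rw [e1, e2, add_comm]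
  -- Step 2 : rewrite `Q (G − v)`
  have h2 : Q (G.induce {u : V | u ≠ v}) x y = ∑ B : Finset {u : V // u ≠ v},
      x ^ B.card * y ^ numComponents (G.induce ((B.map emb : Finset V) : Set V)) := by
    rw [Q]
    refine Finset.sum_nbij' (fun A => A) (fun B => B)
      (fun _ _ => Finset.mem_univ _) (fun _ _ => Finset.mem_univ _)
      (fun _ _ => rfl) (fun _ _ => rfl) ?_
    intro A _
    rw [SCPaux.numComponents_congr (SCPaux.induceInduceIso G {u : V | u ≠ v} A)]
    rfl
  -- Step 4 : rewrite `Q (G / v)`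
  have h4 : Q (contractVertex G v) x y = ∑ B : Finset {u : V // u ≠ v},
      x ^ B.card *
        y ^ numComponents ((contractVertex G v).induce (B : Set {u : V // u ≠ v})) := rfl
  -- Step 3 : rewrite `Q (G − N[v])`
  set NS : Set V := insert v (G.neighborSet v) with hNS
  let emb2 : ↥(NSᶜ) ↪ {u : V // u ≠ v} :=
    ⟨fun u => ⟨u.1, fun e => u.2 (by rw [e]; exact Set.mem_insert _ _)⟩,
      fun a b hab => Subtype.ext (congrArg (fun z : {u : V // u ≠ v} => z.1) hab)⟩
  have h3 : Q (G.induce (NSᶜ)) x y = ∑ B : Finset {u : V // u ≠ v},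
      (if ∀ w ∈ B, ¬ G.Adj v w.1 then
        x ^ B.card * y ^ numComponents (G.induce ((B.map emb : Finset V) : Set V)) else 0) := by
    rw [Q, ← Finset.sum_filter]
    refine Finset.sum_nbij' (fun C => C.map emb2)
      (fun B => (B.map emb).subtype (· ∈ NSᶜ)) ?_ ?_ ?_ ?_ ?_
    · intro C _
      refine Finset.mem_filter.mpr ⟨Finset.mem_univ _, ?_⟩
      intro w hw
      obtain ⟨c, hc, rfl⟩ := Finset.mem_map.mp hw
      intro hadj
      exact c.2 (Set.mem_insert_of_mem _ hadj)
    · intro B _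
      exact Finset.mem_univ _
    · intro C _
      beta_reduce
      ext u
      simp only [Finset.mem_subtype, Finset.mem_map]
      constructor
      · rintro ⟨a, ⟨c, hc, rfl⟩, haa⟩
        exact (Subtype.ext haa : c = u) ▸ hc
      · intro hu
        exact ⟨emb2 u, ⟨u, hu, rfl⟩, rfl⟩
    · intro B hB
      have hc := (Finset.mem_filter.mp hB).2
      beta_reduce
      ext w
      simp only [Finset.mem_map, Finset.mem_subtype]
      constructor
      · rintro ⟨u, hu, rfl⟩
        obtain ⟨b, hb, hbb⟩ := hu
        exact (Subtype.ext hbb : b = emb2 u) ▸ hb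
      · intro hw
        have hmem : w.1 ∈ NSᶜ := by
          intro h
          rcases Set.mem_insert_iff.mp h with e | hn
          · exact w.2 e
          · exact hc w hw hn
        exact ⟨⟨w.1, hmem⟩, ⟨w, hw, rfl⟩, Subtype.ext rfl⟩
    · intro C _
      beta_reduce
      rw [Finset.card_map, SCPaux.numComponents_congr (SCPaux.induceInduceIso G (NSᶜ) C),
        Finset.map_map]
      rfl
  -- Final assembly
  rw [h1, h2, h3, h4, Finset.mul_sum, Finset.mul_sum, ← Finset.sum_add_distrib,
    ← Finset.sum_add_distrib]
  refine Finset.sum_congr rfl fun B _ => ?_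
  by_cases hB : ∀ w ∈ B, ¬ G.Adj v w.1
  · rw [if_pos hB]
    have hvA : v ∉ ((B.map emb : Finset V) : Set V) := fun h => hvnot B (Finset.mem_coe.mp h)
    have hAdj : ∀ w ∈ ((B.map emb : Finset V) : Set V), ¬ G.Adj v w := by
      intro w hw
      obtain ⟨c, hc, hh⟩ := Finset.mem_map.mp (Finset.mem_coe.mp hw)
      exact hh ▸ hB c hc
    have k1 : numComponents (G.induce ((insert v (B.map emb) : Finset V) : Set V))
        = numComponents (G.induce ((B.map emb : Finset V) : Set V)) + 1 := by
      rw [Finset.coe_insert]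
      exact SCPaux.numComponents_insert_isolated G v _ hvA hAdj
    have k2 : numComponents ((contractVertex G v).induce (B : Set {u : V // u ≠ v}))
        = numComponents (G.induce ((B.map emb : Finset V) : Set V)) :=
      SCPaux.numComponents_congr (SCPaux.contractIsoOfNoNeighbor G v B hB)
    rw [k1, k2]
    ring
  · rw [if_neg hB]
    push_neg at hB
    obtain ⟨w0, hw0, hadj⟩ := hB
    have k1 : numComponents (G.induce ((insert v (B.map emb) : Finset V) : Set V))
        = numComponents ((contractVertex G v).induce (B : Set {u : V // u ≠ v})) := by
      rw [Finset.coe_insert]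
      exact SCPaux.numComponents_contract G v B w0 hw0 hadj
    rw [k1]
    ring
end

section
/- If v is a vertex of degree 1 in G with unique neighbor w, then Q(G;x,y) = (1+x)·Q(G−v;x,y) + x(y−1)·Q(G−{v,w};x,y). -/
open Finset
open scoped Classical

namespace Stmt5Aux

variable {V W : Type*}

lemma numComponents_congr {G : SimpleGraph V} {H : SimpleGraph W} (e : G ≃g H) :
    numComponents G = numComponents H :=
  Nat.card_congr e.connectedComponentEquiv

/-- Inclusion hom from an induced subgraph. -/
def inclHom (G : SimpleGraph V) (S : Set V) : G.induce S →g G where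
  toFun := Subtype.val
  map_rel' := fun h => h

/-- Isomorphism between a doubly-induced subgraph and the induced subgraph on the image. -/
noncomputable def doubleInduceIso (G : SimpleGraph V) (S : Set V) (B : Set S) :
    (G.induce S).induce B ≃g G.induce (Subtype.val '' B) where
  toEquiv := Equiv.Set.image Subtype.val B Subtype.val_injective
  map_rel_iff' := by
    intro a b
    simp [Equiv.Set.image, Equiv.Set.imageOfInjOn]

lemma walk_const {G : SimpleGraph V} {β : Sort*} (f : V → β)
    (hf : ∀ a b, G.Adj a b → f a = f b) :
    ∀ (a b : V) (p : G.Walk a b), f a = f b := by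
  intro a b p
  induction p with
  | nil => rfl
  | cons h p ih => exact (hf _ _ h).trans ih

/-- Removing a pendant vertex does not change the number of components. -/
lemma numComponents_pendant (H : SimpleGraph V) (v w : V)
    (h : H.neighborSet v = {w}) :
    numComponents H = numComponents (H.induce {u | u ≠ v}) := by
  have hadj : H.Adj v w := by
    have : w ∈ H.neighborSet v := by rw [h]; rfl
    exact this
  have hwv : w ≠ v := hadj.ne'
  set H' := H.induce {u : V | u ≠ v} with hH'
  let f : V → H'.ConnectedComponent := fun u =>
    if hu : u = v then H'.connectedComponentMk ⟨w, hwv⟩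
    else H'.connectedComponentMk ⟨u, hu⟩
  have hf : ∀ a b, H.Adj a b → f a = f b := by
    intro a b hab
    by_cases ha : a = v
    · subst ha
      have hb : b = w := by
        have : b ∈ H.neighborSet a := hab
        rw [h] at this; exact this
      subst hb
      simp [f, hwv]
    · by_cases hb : b = v
      · subst hb
        have ha' : a = w := by
          have : a ∈ H.neighborSet b := hab.symm
          rw [h] at this; exact this
        subst ha'
        simp [f, hwv]
      · simp only [f, dif_neg ha, dif_neg hb]
        exact SimpleGraph.ConnectedComponent.connectedComponentMk_eq_of_adj
          (by exact hab : H'.Adj ⟨a, ha⟩ ⟨b, hb⟩)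
  let F : H.ConnectedComponent → H'.ConnectedComponent :=
    SimpleGraph.ConnectedComponent.lift f (fun a b p _ => walk_const f hf a b p)
  let Ginv : H'.ConnectedComponent → H.ConnectedComponent :=
    SimpleGraph.ConnectedComponent.map (inclHom H _)
  have left : ∀ c, Ginv (F c) = c := by
    refine SimpleGraph.ConnectedComponent.ind ?_
    intro u
    by_cases hu : u = v
    · subst hu
      show Ginv (f u) = _
      simp only [f, dif_pos rfl]
      show H.connectedComponentMk w = H.connectedComponentMk u
      exact SimpleGraph.ConnectedComponent.connectedComponentMk_eq_of_adj hadj.symm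
    · show Ginv (f u) = _
      simp only [f, dif_neg hu]
      rfl
  have right : ∀ c, F (Ginv c) = c := by
    refine SimpleGraph.ConnectedComponent.ind ?_
    rintro ⟨u, hu⟩
    show F (H.connectedComponentMk u) = _
    show f u = _
    simp only [f, dif_neg hu]
  exact Nat.card_congr ⟨F, Ginv, left, right⟩

/-- Removing an isolated vertex decreases the number of components by one. -/
lemma numComponents_isolated [Finite V] (H : SimpleGraph V) (v : V)
    (h : H.neighborSet v = ∅) :
    numComponents H = numComponents (H.induce {u | u ≠ v}) + 1 := by
  set H' := H.induce {u : V | u ≠ v} with hH'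
  let f : V → Option H'.ConnectedComponent := fun u =>
    if hu : u = v then none else some (H'.connectedComponentMk ⟨u, hu⟩)
  have hf : ∀ a b, H.Adj a b → f a = f b := by
    intro a b hab
    have ha : a ≠ v := by
      rintro rfl
      have : b ∈ H.neighborSet a := hab
      rw [h] at this; exact this
    have hb : b ≠ v := by
      rintro rfl
      have : a ∈ H.neighborSet b := hab.symm
      rw [h] at this; exact this
    simp only [f, dif_neg ha, dif_neg hb, Option.some.injEq]
    exact SimpleGraph.ConnectedComponent.connectedComponentMk_eq_of_adj
      (by exact hab : H'.Adj ⟨a, ha⟩ ⟨b, hb⟩)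
  let F : H.ConnectedComponent → Option H'.ConnectedComponent :=
    SimpleGraph.ConnectedComponent.lift f (fun a b p _ => walk_const f hf a b p)
  let Ginv : Option H'.ConnectedComponent → H.ConnectedComponent := fun o =>
    o.elim (H.connectedComponentMk v) (SimpleGraph.ConnectedComponent.map (inclHom H _))
  have left : ∀ c, Ginv (F c) = c := by
    refine SimpleGraph.ConnectedComponent.ind ?_
    intro u
    by_cases hu : u = v
    · subst hu
      show Ginv (f u) = _
      simp only [f, dif_pos rfl]
      rfl
    · show Ginv (f u) = _
      simp only [f, dif_neg hu]
      rfl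
  have right : ∀ c, F (Ginv c) = c := by
    rintro (_ | c)
    · show f v = none
      simp [f]
    · revert c
      refine SimpleGraph.ConnectedComponent.ind ?_
      rintro ⟨u, hu⟩
      show f u = _
      simp only [f, dif_neg hu]
  have : Nat.card H.ConnectedComponent = Nat.card (Option H'.ConnectedComponent) :=
    Nat.card_congr ⟨F, Ginv, left, right⟩
  rw [numComponents, this, Finite.card_option]
  rfl

lemma image_val_compl (s : Finset V) (v : V) (hv : v ∉ s) (hm : v ∈ (↑(insert v s) : Set V)) :
    Subtype.val '' {u : (↑(insert v s) : Set V) | u ≠ ⟨v, hm⟩} = (↑s : Set V) := by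
  ext u
  constructor
  · rintro ⟨⟨a, ha⟩, hne, rfl⟩
    have ha' : a ∈ insert v s := by exact_mod_cast ha
    have : a ≠ v := fun h => hne (Subtype.ext h)
    simpa using (Finset.mem_insert.mp ha').resolve_left this
  · intro hu
    have hu' : u ∈ s := by exact_mod_cast hu
    refine ⟨⟨u, by simp [hu']⟩, ?_, rfl⟩
    intro h
    exact hv (by rwa [show u = v from congrArg Subtype.val h] at hu')

lemma numComponents_set_congr (G : SimpleGraph V) {S T : Set V} (h : S = T) :
    numComponents (G.induce S) = numComponents (G.induce T) := by subst h; rfl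

/-- Adding an isolated vertex. -/
lemma numComponents_insert_isolated [Fintype V] (G : SimpleGraph V) (v w : V)
    (hvw : G.neighborSet v = {w}) (t : Finset V) (hvt : v ∉ t) (hwt : w ∉ t) :
    numComponents (G.induce (↑(insert v t) : Set V))
      = numComponents (G.induce (↑t : Set V)) + 1 := by
  have hm : v ∈ (↑(insert v t) : Set V) := by simp
  have hN : (G.induce (↑(insert v t) : Set V)).neighborSet ⟨v, hm⟩ = ∅ := by
    ext ⟨u, hu⟩
    simp only [SimpleGraph.mem_neighborSet, Set.mem_empty_iff_false, iff_false]
    intro hadj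
    have : u ∈ G.neighborSet v := hadj
    rw [hvw] at this
    have hu' : u ∈ insert v t := by exact_mod_cast hu
    have huw : u = w := this
    rcases Finset.mem_insert.mp hu' with h | h
    · have hadj' : G.Adj v u := hadj
      exact G.irrefl (h ▸ hadj')
    · exact hwt (huw ▸ h)
  rw [numComponents_isolated _ _ hN,
    numComponents_congr (doubleInduceIso G _ _),
    numComponents_set_congr G (image_val_compl t v hvt hm)]

/-- Adding a pendant vertex. -/
lemma numComponents_insert_pendant [Fintype V] (G : SimpleGraph V) (v w : V)
    (hvw : G.neighborSet v = {w}) (t : Finset V) (hvt : v ∉ t) (hwm : w ∈ t) :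
    numComponents (G.induce (↑(insert v t) : Set V))
      = numComponents (G.induce (↑t : Set V)) := by
  have hadj : G.Adj v w := by
    have : w ∈ G.neighborSet v := by rw [hvw]; rfl
    exact this
  have hm : v ∈ (↑(insert v t) : Set V) := by simp
  have hmw : w ∈ (↑(insert v t) : Set V) := by simp [hwm]
  have hN : (G.induce (↑(insert v t) : Set V)).neighborSet ⟨v, hm⟩ = {⟨w, hmw⟩} := by
    ext ⟨u, hu⟩
    simp only [SimpleGraph.mem_neighborSet, Set.mem_singleton_iff]
    constructor
    · intro hadj'
      have : u ∈ G.neighborSet v := hadj'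
      rw [hvw] at this
      exact Subtype.ext this
    · intro h
      have : u = w := congrArg Subtype.val h
      subst this
      exact hadj
  rw [numComponents_pendant _ _ _ hN,
    numComponents_congr (doubleInduceIso G _ _),
    numComponents_set_congr G (image_val_compl t v hvt hm)]

lemma Q_eq_powerset [Fintype V] (G : SimpleGraph V) (s : Finset V) (x y : ℝ) :
    Q (G.induce (↑s : Set V)) x y
      = ∑ t ∈ s.powerset, x ^ t.card * y ^ numComponents (G.induce (↑t : Set V)) := by
  rw [Q]
  refine Finset.sum_bij' (fun (B : Finset (↑s : Set V)) _ =>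
      B.map (Function.Embedding.subtype _))
    (fun t _ => t.subtype (fun u => u ∈ (↑s : Set V))) ?_ ?_ ?_ ?_ ?_
  · intro B _
    simp only [Finset.mem_powerset]
    intro u hu
    rcases Finset.mem_map.mp hu with ⟨⟨a, ha⟩, _, rfl⟩
    exact_mod_cast ha
  · intro t _
    exact Finset.mem_univ _
  · intro B _
    ext ⟨u, hu⟩
    rw [Finset.mem_subtype, Finset.mem_map]
    constructor
    · rintro ⟨a, haB, ha⟩
      have : a = ⟨u, hu⟩ := Subtype.ext ha
      rwa [this] at haB
    · intro h
      exact ⟨⟨u, hu⟩, h, rfl⟩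
  · intro t ht
    rw [Finset.subtype_map]
    exact Finset.filter_true_of_mem (fun u hu => by
      exact_mod_cast Finset.mem_powerset.mp ht hu)
  · intro B _
    have hk : numComponents ((G.induce (↑s : Set V)).induce (↑B : Set (↑s : Set V)))
        = numComponents (G.induce
            (↑(B.map (Function.Embedding.subtype fun u => u ∈ (↑s : Set V))) : Set V)) := by
      rw [numComponents_congr (doubleInduceIso G (↑s : Set V) (↑B : Set (↑s : Set V)))]
      refine numComponents_set_congr G ?_
      ext u
      simp only [Set.mem_image, Finset.mem_coe, Finset.mem_map,
        Function.Embedding.coe_subtype]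
    rw [Finset.card_map, hk]

end Stmt5Aux


lemma Q_set_congr {V : Type*} (G : SimpleGraph V) {S T : Set V}
    [inst1 : Fintype S] [inst2 : Fintype T] (h : S = T) (x y : ℝ) :
    @Q _ inst1 (G.induce S) x y = @Q _ inst2 (G.induce T) x y := by
  subst h
  exact congrArg (fun i => @Q _ i (G.induce S) x y) (Subsingleton.elim inst1 inst2)

theorem stmt5 {V : Type*} [Fintype V] (G : SimpleGraph V) (v w : V)
    (hvw : G.neighborSet v = {w}) (x y : ℝ) :
    Q G x y =
      (1 + x) * Q (G.induce {u : V | u ≠ v}) x y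
        + x * (y - 1) * Q (G.induce {u : V | u ≠ v ∧ u ≠ w}) x y := by
  classical
  have hadj : G.Adj v w := by
    have : w ∈ G.neighborSet v := by rw [hvw]; rfl
    exact this
  have hvne : v ≠ w := hadj.ne
  set U1 : Finset V := Finset.univ.erase v with hU1
  set U2 : Finset V := U1.erase w with hU2
  have hvU1 : v ∉ U1 := Finset.notMem_erase _ _
  have hwU2 : w ∉ U2 := Finset.notMem_erase _ _
  have hvU2 : v ∉ U2 := fun h => hvU1 (Finset.mem_of_mem_erase h)
  have hwU1 : w ∈ U1 := Finset.mem_erase.mpr ⟨hvne.symm, Finset.mem_univ w⟩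
  have hU1' : insert w U2 = U1 := Finset.insert_erase hwU1
  have huniv : insert v U1 = Finset.univ := Finset.insert_erase (Finset.mem_univ v)
  have hSv : ({u : V | u ≠ v} : Set V) = (↑U1 : Set V) := by ext u; simp [hU1]
  have hSvw : ({u : V | u ≠ v ∧ u ≠ w} : Set V) = (↑U2 : Set V) := by
    ext u; simp [hU1, hU2]
  set S1 : ℝ := ∑ t ∈ U2.powerset, x ^ t.card * y ^ numComponents (G.induce (↑t : Set V))
    with hS1
  set T : ℝ := ∑ t ∈ U2.powerset,
      x ^ (insert w t).card * y ^ numComponents (G.induce (↑(insert w t) : Set V)) with hT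
  have hQ1 : Q (G.induce {u : V | u ≠ v}) x y = S1 + T := by
    rw [Q_set_congr G hSv, Stmt5Aux.Q_eq_powerset, ← hU1', Finset.sum_powerset_insert hwU2]
  have hQ2 : Q (G.induce {u : V | u ≠ v ∧ u ≠ w}) x y = S1 := by
    rw [Q_set_congr G hSvw, Stmt5Aux.Q_eq_powerset]
  have e1 : ∑ t ∈ U2.powerset,
        x ^ (insert v t).card * y ^ numComponents (G.induce (↑(insert v t) : Set V))
      = x * y * S1 := by
    rw [hS1, Finset.mul_sum]
    refine Finset.sum_congr rfl fun t ht => ?_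
    have hvt : v ∉ t := fun h => hvU2 (Finset.mem_powerset.mp ht h)
    have hwt : w ∉ t := fun h => hwU2 (Finset.mem_powerset.mp ht h)
    rw [Finset.card_insert_of_notMem hvt,
      Stmt5Aux.numComponents_insert_isolated G v w hvw t hvt hwt, pow_succ, pow_succ]
    ring
  have e2 : ∑ t ∈ U2.powerset,
        x ^ (insert v (insert w t)).card
          * y ^ numComponents (G.induce (↑(insert v (insert w t)) : Set V))
      = x * T := by
    rw [hT, Finset.mul_sum]
    refine Finset.sum_congr rfl fun t ht => ?_
    have hvt : v ∉ t := fun h => hvU2 (Finset.mem_powerset.mp ht h)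
    have hvwt : v ∉ insert w t := by
      simp only [Finset.mem_insert, not_or]
      exact ⟨hvne, hvt⟩
    rw [Finset.card_insert_of_notMem hvwt,
      Stmt5Aux.numComponents_insert_pendant G v w hvw (insert w t) hvwt (Finset.mem_insert_self w t),
      pow_succ]
    ring
  have hQG : Q G x y = (S1 + T) + (x * y * S1 + x * T) := by
    rw [Q, ← Finset.powerset_univ, ← huniv, Finset.sum_powerset_insert hvU1,
      ← hU1', Finset.sum_powerset_insert hwU2, Finset.sum_powerset_insert hwU2, e1, e2]
  rw [hQG, hQ1, hQ2]
  ring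
end

section
/- The subgraph component polynomials of paths satisfy the recurrence Q(P_n;x,y) = (1+x)·Q(P_{n−1};x,y) + x(y−1)·Q(P_{n−2};x,y) for n ≥ 2, with Q(P_0;x,y)=1 and Q(P_1;x,y)=1+xy. -/
open Finset
open scoped Classical

namespace Aux

def trues {n : ℕ} (f : Fin n → Bool) : ℕ := ∑ i, if f i = true then 1 else 0

def isStart {n : ℕ} (f : Fin n → Bool) (i : Fin n) : Prop :=
  f i = true ∧ ∀ j : Fin n, (j : ℕ) + 1 = (i : ℕ) → f j = false

noncomputable def starts {n : ℕ} (f : Fin n → Bool) : ℕ := ∑ i, if isStart f i then 1 else 0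

noncomputable def W {n : ℕ} (x y : ℝ) (f : Fin n → Bool) : ℝ := x ^ trues f * y ^ starts f

noncomputable def S (n : ℕ) (x y : ℝ) : ℝ := ∑ f : Fin n → Bool, W x y f

lemma trues_snoc {n : ℕ} (g : Fin n → Bool) (b : Bool) :
    trues (Fin.snoc g b) = trues g + (if b = true then 1 else 0) := by
  unfold trues
  rw [Fin.sum_univ_castSucc]
  simp

lemma isStart_snoc_castSucc {n : ℕ} (g : Fin n → Bool) (b : Bool) (i : Fin n) :
    isStart (Fin.snoc g b) (Fin.castSucc i) ↔ isStart g i := by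
  unfold isStart
  constructor
  · rintro ⟨h1, h2⟩
    rw [Fin.snoc_castSucc] at h1
    refine ⟨h1, fun j hj => ?_⟩
    have := h2 (Fin.castSucc j) (by simpa using hj)
    simpa using this
  · rintro ⟨h1, h2⟩
    refine ⟨by simpa using h1, fun j hj => ?_⟩
    simp only [Fin.coe_castSucc] at hj
    have hjn : (j : ℕ) < n := by omega
    have hje : j = Fin.castSucc ⟨(j : ℕ), hjn⟩ := by ext; simp
    rw [hje, Fin.snoc_castSucc]
    exact h2 _ (by simpa using hj)

lemma isStart_snoc_last {n : ℕ} (g : Fin n → Bool) (b : Bool) :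
    isStart (Fin.snoc g b) (Fin.last n) ↔
      (b = true ∧ ∀ j : Fin n, (j : ℕ) + 1 = n → g j = false) := by
  unfold isStart
  constructor
  · rintro ⟨h1, h2⟩
    rw [Fin.snoc_last] at h1
    refine ⟨h1, fun j hj => ?_⟩
    have := h2 (Fin.castSucc j) (by simpa using hj)
    simpa using this
  · rintro ⟨h1, h2⟩
    refine ⟨by simpa using h1, fun j hj => ?_⟩
    simp only [Fin.val_last] at hj
    have hjn : (j : ℕ) < n := by omega
    have hje : j = Fin.castSucc ⟨(j : ℕ), hjn⟩ := by ext; simp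
    rw [hje, Fin.snoc_castSucc]
    exact h2 _ (by simpa using hj)

lemma starts_snoc {n : ℕ} (g : Fin n → Bool) (b : Bool) :
    starts (Fin.snoc g b) = starts g +
      (if (b = true ∧ ∀ j : Fin n, (j : ℕ) + 1 = n → g j = false) then 1 else 0) := by
  unfold starts
  rw [Fin.sum_univ_castSucc]
  congr 1
  · exact Finset.sum_congr rfl fun i _ => by
      rw [if_congr (isStart_snoc_castSucc g b i) rfl rfl]
  · rw [if_congr (isStart_snoc_last g b) rfl rfl]

lemma W_snoc_false {n : ℕ} (x y : ℝ) (g : Fin n → Bool) :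
    W x y (Fin.snoc g false) = W x y g := by
  unfold W
  rw [trues_snoc, starts_snoc]
  simp

lemma lastCond {n : ℕ} (g : Fin (n + 1) → Bool) :
    (∀ j : Fin (n + 1), (j : ℕ) + 1 = n + 1 → g j = false) ↔ g (Fin.last n) = false := by
  constructor
  · intro h; exact h (Fin.last n) (by simp)
  · intro h j hj
    have : j = Fin.last n := by ext; simpa using hj
    rwa [this]

lemma W_snoc_true {n : ℕ} (x y : ℝ) (g : Fin (n + 1) → Bool) :
    W x y (Fin.snoc g true) =
      if g (Fin.last n) = false then x * y * W x y g else x * W x y g := by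
  unfold W
  rw [trues_snoc, starts_snoc]
  have h1 : (if (true : Bool) = true then 1 else 0) = 1 := rfl
  rw [h1]
  by_cases h : g (Fin.last n) = false
  · rw [if_pos ⟨rfl, (lastCond g).mpr h⟩, if_pos h, pow_succ, pow_succ]; ring
  · rw [if_neg (fun hc => h ((lastCond g).mp hc.2)), if_neg h, pow_succ, add_zero]; ring

lemma sum_snoc {n : ℕ} (F : (Fin (n + 1) → Bool) → ℝ) :
    ∑ f : Fin (n + 1) → Bool, F f =
      (∑ g : Fin n → Bool, F (Fin.snoc g true)) +
      (∑ g : Fin n → Bool, F (Fin.snoc g false)) := by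
  rw [← Fintype.sum_equiv (Fin.snocEquiv (fun _ => Bool)) _ F (fun p => rfl)]
  rw [Fintype.sum_prod_type, Fintype.sum_bool]
  rfl

lemma S_zero (x y : ℝ) : S 0 x y = 1 := by
  unfold S
  haveI : Unique (Fin 0 → Bool) := ⟨⟨fun i => i.elim0⟩, fun f => funext fun i => i.elim0⟩
  rw [Fintype.sum_unique]
  simp [W, trues, starts]

lemma S_one (x y : ℝ) : S 1 x y = 1 + x * y := by
  unfold S
  rw [← Fintype.sum_equiv (Equiv.funUnique (Fin 1) Bool).symm _ _ (fun b => rfl),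
    Fintype.sum_bool]
  have h1 : W x y ((Equiv.funUnique (Fin 1) Bool).symm true) = x * y := by
    unfold W trues starts isStart
    norm_num [Fin.sum_univ_one, Equiv.funUnique]
  have h2 : W x y ((Equiv.funUnique (Fin 1) Bool).symm false) = 1 := by
    unfold W trues starts isStart
    norm_num [Fin.sum_univ_one, Equiv.funUnique]
  rw [h1, h2]; ring

lemma S_rec (n : ℕ) (x y : ℝ) :
    S (n + 2) x y = (1 + x) * S (n + 1) x y + x * (y - 1) * S n x y := by
  have hlast : ∑ g : Fin (n + 1) → Bool,
      (if g (Fin.last n) = false then W x y g else 0) = S n x y := by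
    rw [sum_snoc (fun g => if g (Fin.last n) = false then W x y g else 0)]
    have e1 : ∀ g : Fin n → Bool,
        (if (Fin.snoc g true : Fin (n+1) → Bool) (Fin.last n) = false
          then W x y (Fin.snoc g true) else 0) = 0 := by
      intro g; rw [Fin.snoc_last]; simp
    have e2 : ∀ g : Fin n → Bool,
        (if (Fin.snoc g false : Fin (n+1) → Bool) (Fin.last n) = false
          then W x y (Fin.snoc g false) else 0) = W x y g := by
      intro g; rw [Fin.snoc_last, if_pos rfl, W_snoc_false]
    rw [Finset.sum_congr rfl fun g _ => e1 g, Finset.sum_congr rfl fun g _ => e2 g,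
      Finset.sum_const_zero, zero_add]
    rfl
  have : S (n + 2) x y =
      (∑ g : Fin (n + 1) → Bool, W x y (Fin.snoc g true)) + S (n + 1) x y := by
    unfold S
    rw [sum_snoc (fun f => W x y f)]
    congr 1
    exact Finset.sum_congr rfl fun g _ => W_snoc_false x y g
  rw [this]
  have : ∑ g : Fin (n + 1) → Bool, W x y (Fin.snoc g true) =
      x * S (n + 1) x y + x * (y - 1) * S n x y := by
    have step : ∀ g : Fin (n + 1) → Bool, W x y (Fin.snoc g true) =
        x * W x y g + (if g (Fin.last n) = false then x * (y - 1) * W x y g else 0) := by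
      intro g
      rw [W_snoc_true]
      by_cases h : g (Fin.last n) = false
      · rw [if_pos h, if_pos h]; ring
      · rw [if_neg h, if_neg h]; ring
    rw [Finset.sum_congr rfl fun g _ => step g, Finset.sum_add_distrib]
    congr 1
    · rw [← Finset.mul_sum]; rfl
    · have : ∀ g : Fin (n+1) → Bool, (if g (Fin.last n) = false then x * (y - 1) * W x y g else 0)
          = x * (y - 1) * (if g (Fin.last n) = false then W x y g else 0) := by
        intro g; split <;> ring
      rw [Finset.sum_congr rfl fun g _ => this g, ← Finset.mul_sum, hlast]
  rw [this]; ring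


def StartA {n : ℕ} (A : Finset (Fin n)) (i : Fin n) : Prop :=
  i ∈ A ∧ ∀ j : Fin n, (j : ℕ) + 1 = (i : ℕ) → j ∉ A

variable {n : ℕ} {A : Finset (Fin n)}

abbrev IG (A : Finset (Fin n)) : SimpleGraph ((A : Set (Fin n)) : Set (Fin n)) :=
  (SimpleGraph.pathGraph n).induce (A : Set (Fin n))

lemma walk_interval : ∀ {u v : ((A : Set (Fin n)) : Set (Fin n))}
    (_ : (IG A).Walk u v) (k : ℕ), ((u : Fin n) : ℕ) ≤ k → k ≤ ((v : Fin n) : ℕ) →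
    ∃ m : Fin n, (m : ℕ) = k ∧ m ∈ A := by
  intro u v w
  induction w with
  | @nil a =>
    intro k hk1 hk2
    exact ⟨a, by omega, Finset.mem_coe.mp a.2⟩
  | @cons a b c h p ih =>
    intro k hk1 hk2
    rcases eq_or_lt_of_le hk1 with heq | hlt
    · exact ⟨a, heq, Finset.mem_coe.mp a.2⟩
    · have hadj : (SimpleGraph.pathGraph n).Adj a.1 b.1 := h
      rw [SimpleGraph.pathGraph_adj] at hadj
      exact ih k (by omega) hk2

lemma reach_start : ∀ (k : ℕ) (v : ((A : Set (Fin n)) : Set (Fin n))),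
    ((v : Fin n) : ℕ) < k →
    ∃ s : ((A : Set (Fin n)) : Set (Fin n)), StartA A s.1 ∧ (IG A).Reachable s v := by
  intro k
  induction k with
  | zero => intro v hv; omega
  | succ k ih =>
    intro v hv
    by_cases hs : StartA A v.1
    · exact ⟨v, hs, SimpleGraph.Reachable.refl _⟩
    · unfold StartA at hs
      push_neg at hs
      obtain ⟨j, hj1, hj2⟩ := hs (Finset.mem_coe.mp v.2)
      have hb : j ∈ (A : Set (Fin n)) := Finset.mem_coe.mpr hj2
      have hadj : (IG A).Adj ⟨j, hb⟩ v := by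
        show (SimpleGraph.pathGraph n).Adj j v.1
        rw [SimpleGraph.pathGraph_adj]
        left; exact hj1
      obtain ⟨s, hs1, hs2⟩ := ih ⟨j, hb⟩ (by simp only; omega)
      exact ⟨s, hs1, hs2.trans hadj.reachable⟩

lemma start_unique {s t : ((A : Set (Fin n)) : Set (Fin n))}
    (hs : StartA A s.1) (ht : StartA A t.1) (h : (IG A).Reachable s t) : s = t := by
  rcases lt_trichotomy ((s : Fin n) : ℕ) ((t : Fin n) : ℕ) with hlt | heq | hgt
  · obtain ⟨w⟩ := h
    obtain ⟨m, hm1, hm2⟩ := walk_interval w (((t : Fin n) : ℕ) - 1) (by omega) (by omega)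
    exact absurd hm2 (ht.2 m (by omega))
  · exact Subtype.ext (Fin.ext heq)
  · obtain ⟨w⟩ := h.symm
    obtain ⟨m, hm1, hm2⟩ := walk_interval w (((s : Fin n) : ℕ) - 1) (by omega) (by omega)
    exact absurd hm2 (hs.2 m (by omega))

lemma numComponents_induce (A : Finset (Fin n)) :
    numComponents ((SimpleGraph.pathGraph n).induce (A : Set (Fin n))) =
      (univ.filter (StartA A)).card := by
  classical
  let F : {i : Fin n // StartA A i} →
      ((SimpleGraph.pathGraph n).induce (A : Set (Fin n))).ConnectedComponent :=
    fun s => ((SimpleGraph.pathGraph n).induce (A : Set (Fin n))).connectedComponentMk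
      ⟨s.1, Finset.mem_coe.mpr s.2.1⟩
  have hbij : Function.Bijective F := by
    constructor
    · intro s t hst
      have hr := (SimpleGraph.ConnectedComponent.eq).mp hst
      have := start_unique (s := ⟨s.1, Finset.mem_coe.mpr s.2.1⟩)
        (t := ⟨t.1, Finset.mem_coe.mpr t.2.1⟩) s.2 t.2 hr
      have h2 := congrArg Subtype.val this
      exact Subtype.ext h2
    · intro c
      obtain ⟨v, rfl⟩ := c.exists_rep
      obtain ⟨s, hs1, hs2⟩ := reach_start n v (v.1.isLt)
      refine ⟨⟨s.1, hs1⟩, ?_⟩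
      show _ = _
      refine Eq.trans ?_ (SimpleGraph.ConnectedComponent.sound hs2)
      congr
  unfold numComponents
  rw [← Nat.card_eq_of_bijective F hbij, Nat.card_eq_fintype_card, Fintype.card_subtype]


lemma starts_eq {n : ℕ} (A : Finset (Fin n)) :
    starts (fun i => decide (i ∈ A)) = (univ.filter (StartA A)).card := by
  rw [Finset.card_filter]
  refine Finset.sum_congr rfl fun i _ => ?_
  refine if_congr ?_ rfl rfl
  unfold isStart StartA
  simp

lemma trues_eq {n : ℕ} (A : Finset (Fin n)) :
    trues (fun i => decide (i ∈ A)) = A.card := by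
  unfold trues
  rw [← Finset.card_filter]
  congr 1
  ext i
  simp

lemma Q_eq_S (n : ℕ) (x y : ℝ) :
    Q (SimpleGraph.pathGraph n) x y = S n x y := by
  have hnum := fun A : Finset (Fin n) => numComponents_induce A
  unfold S W
  unfold Q
  refine Fintype.sum_bijective (fun A : Finset (Fin n) => fun i => decide (i ∈ A))
    ⟨?_, ?_⟩ _ _ ?_
  · intro A B h
    ext i
    have := congrFun h i
    simpa using this
  · intro f
    refine ⟨univ.filter (fun i => f i = true), funext fun i => ?_⟩
    by_cases h : f i <;> simp [h]
  · intro A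
    rw [trues_eq, starts_eq, hnum]

end Aux

theorem stmt8 (x y : ℝ) :
    Q (SimpleGraph.pathGraph 0) x y = 1 ∧
    Q (SimpleGraph.pathGraph 1) x y = 1 + x * y ∧
    ∀ n : ℕ, 2 ≤ n →
      Q (SimpleGraph.pathGraph n) x y =
        (1 + x) * Q (SimpleGraph.pathGraph (n - 1)) x y +
          x * (y - 1) * Q (SimpleGraph.pathGraph (n - 2)) x y := by
  refine ⟨?_, ?_, ?_⟩
  · rw [Aux.Q_eq_S]; exact Aux.S_zero x y
  · rw [Aux.Q_eq_S]; exact Aux.S_one x y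
  · intro n hn
    obtain ⟨m, rfl⟩ : ∃ m, n = m + 2 := ⟨n - 2, by omega⟩
    have h1 : m + 2 - 1 = m + 1 := rfl
    have h2 : m + 2 - 2 = m := rfl
    rw [h1, h2, Aux.Q_eq_S, Aux.Q_eq_S, Aux.Q_eq_S, Aux.S_rec]
end

section
/- For every finite simple graph G, the degree of Q(G;x,y) in the variable y equals the independence number α(G) of G. -/
open Finset MvPolynomial
open scoped Classical

/-- The subgraph component polynomial as a bivariate polynomial:
`Q(G;x,y) = ∑_{A ⊆ V} x^|A| y^{k(G[A])}`, with `X 0 = x` and `X 1 = y`. -/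
noncomputable def Qmv {V : Type*} [Fintype V] (G : SimpleGraph V) :
    MvPolynomial (Fin 2) ℤ :=
  ∑ A : Finset V, X 0 ^ A.card * X 1 ^ numComponents (G.induce (A : Set V))

/-- The independence number of `G`: the maximum size of a set of pairwise
non-adjacent vertices. -/
noncomputable def indepNum {V : Type*} [Fintype V] (G : SimpleGraph V) : ℕ :=
  sSup {k : ℕ | ∃ A : Finset V, A.card = k ∧ (A : Set V).Pairwise fun u w => ¬ G.Adj u w}

lemma numComponents_of_indep {V : Type*} [Fintype V] (G : SimpleGraph V)
    (A : Finset V) (h : (A : Set V).Pairwise fun u w => ¬ G.Adj u w) :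
    numComponents (G.induce (A : Set V)) = A.card := by
  have hb : Function.Bijective (G.induce (A : Set V)).connectedComponentMk := by
    constructor
    · intro u v huv
      have hr : (G.induce (A : Set V)).Reachable u v :=
        (SimpleGraph.ConnectedComponent.eq).1 huv
      obtain ⟨w⟩ := hr
      cases w with
      | nil => rfl
      | cons hadj _ =>
        exact h (Subtype.mem _) (Subtype.mem _)
          (fun he => hadj.ne (Subtype.ext he)) hadj |>.elim
    · exact Quot.exists_rep
  have := Nat.card_eq_of_bijective _ hb
  unfold numComponents
  rw [← this]
  simp [Nat.card_eq_fintype_card]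

lemma numComponents_mem {V : Type*} [Fintype V] (G : SimpleGraph V) (A : Finset V) :
    ∃ B : Finset V, B.card = numComponents (G.induce (A : Set V)) ∧
      (B : Set V).Pairwise fun u w => ¬ G.Adj u w := by
  classical
  set H := G.induce (A : Set V)
  refine ⟨Finset.univ.image (fun c : H.ConnectedComponent => (c.out : V)), ?_, ?_⟩
  · rw [Finset.card_image_of_injective]
    · simp [numComponents, Nat.card_eq_fintype_card]
    · intro c c' hcc
      have : (c.out : ↥(A : Set V)) = c'.out := Subtype.ext hcc
      calc c = H.connectedComponentMk c.out := c.out_eq.symm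
        _ = H.connectedComponentMk c'.out := by rw [this]
        _ = c' := c'.out_eq
  · intro u hu w hw huw hadj
    simp only [Finset.coe_image, Set.mem_image, Finset.coe_univ, Set.mem_univ,
      true_and] at hu hw
    obtain ⟨c, rfl⟩ := hu
    obtain ⟨c', rfl⟩ := hw
    have hadj' : H.Adj c.out c'.out := hadj
    have : c = c' := by
      calc c = H.connectedComponentMk c.out := c.out_eq.symm
        _ = H.connectedComponentMk c'.out :=
          SimpleGraph.ConnectedComponent.eq.2 hadj'.reachable
        _ = c' := c'.out_eq
    exact huw (by rw [this])

theorem stmt10 {V : Type*} [Fintype V] (G : SimpleGraph V) :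
    (Qmv G).degreeOf 1 = indepNum G := by
  classical
  set S : Set ℕ := {k : ℕ | ∃ A : Finset V, A.card = k ∧
    (A : Set V).Pairwise fun u w => ¬ G.Adj u w} with hS
  have hSne : S.Nonempty := ⟨0, ∅, by simp⟩
  have hSbdd : BddAbove S := by
    refine ⟨Fintype.card V, fun k hk => ?_⟩
    obtain ⟨A, hA, -⟩ := hk
    exact hA ▸ A.card_le_univ.trans_eq (Finset.card_univ)
  have hd : ∀ A : Finset V,
      (X (0 : Fin 2) ^ A.card * X 1 ^ numComponents (G.induce (A : Set V))
        : MvPolynomial (Fin 2) ℤ) =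
      monomial (Finsupp.single 0 A.card +
        Finsupp.single 1 (numComponents (G.induce (A : Set V)))) 1 := by
    intro A
    rw [X_pow_eq_monomial, X_pow_eq_monomial, monomial_mul, one_mul]
  refine le_antisymm ?_ ?_
  · refine (MvPolynomial.degreeOf_sum_le _ _ _).trans ?_
    rw [Finset.sup_le_iff]
    intro A _
    rw [hd A]
    rw [MvPolynomial.degreeOf_monomial_eq _ _ (one_ne_zero)]
    obtain ⟨B, hBcard, hBindep⟩ := numComponents_mem G A
    have hmem : numComponents (G.induce (A : Set V)) ∈ S := ⟨B, hBcard, hBindep⟩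
    have := le_csSup hSbdd hmem
    simpa [Finsupp.single_apply] using (show numComponents (G.induce (A : Set V)) ≤ indepNum G from this)
  · show indepNum G ≤ _
    have hmem : indepNum G ∈ S := Nat.sSup_mem hSne hSbdd
    obtain ⟨A, hAcard, hAindep⟩ := hmem
    set α := indepNum G
    set m : Fin 2 →₀ ℕ := Finsupp.single 0 α + Finsupp.single 1 α with hm
    have hk : numComponents (G.induce (A : Set V)) = α := by
      rw [numComponents_of_indep G A hAindep, hAcard]
    have hcoeff : (Qmv G).coeff m ≠ 0 := by
      unfold Qmv
      rw [MvPolynomial.coeff_sum]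
      simp_rw [hd, MvPolynomial.coeff_monomial]
      have hpos : (0 : ℤ) < ∑ A' : Finset V,
          if Finsupp.single 0 A'.card +
            Finsupp.single 1 (numComponents (G.induce (A' : Set V))) = m
          then 1 else 0 := by
        refine Finset.sum_pos' (fun A' _ => by positivity) ⟨A, Finset.mem_univ A, ?_⟩
        rw [hAcard, hk, if_pos rfl]
        norm_num
      exact ne_of_gt hpos
    have hsupp : m ∈ (Qmv G).support := MvPolynomial.mem_support_iff.2 hcoeff
    have := Finset.le_sup (f := fun m : Fin 2 →₀ ℕ => m 1) hsupp
    rw [MvPolynomial.degreeOf_eq_sup]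
    simpa [hm, Finsupp.single_apply] using this
end

section
/- Let G be a finite simple graph and let Star_y be the looped star with center v_0 and y outer vertices, each vertex carrying a loop, with vertex weights α(v_0)=1 and α(v_i)=x for i≥1, and all edge weights 1. Then for every nonnegative integer y and real x, the weighted homomorphism partition function Z_{Star_y}(G) = \sum_{h: G → Star_y hom} \prod_{v∈V} α(h(v)) equals Q(G;x,y). -/
open Finset
open scoped Classical

/-- Adjacency in the looped star `Star_y`: the center is `none`, the outer vertices are
`some i`; every vertex has a loop and the center is adjacent to all outer vertices. -/
def starAdj {y : ℕ} (a b : Option (Fin y)) : Prop := a = none ∨ b = none ∨ a = b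

/-- The vertex weight `α`: weight 1 on the center, weight `x` on the outer vertices. -/
def starWeight {y : ℕ} (x : ℝ) (a : Option (Fin y)) : ℝ := if a = none then 1 else x

section Aux
variable {V : Type*} [Fintype V] (G : SimpleGraph V) (y : ℕ) (A : Finset V)

/-- Homs with support `A` correspond to colorings of the components of `G[A]`. -/
noncomputable def homEquiv :
    {h : V → Option (Fin y) //
        (∀ v, h v ≠ none ↔ v ∈ A) ∧ ∀ u v, G.Adj u v → starAdj (h u) (h v)}
      ≃ ((G.induce (A : Set V)).ConnectedComponent → Fin y) where
  toFun := fun ⟨h, hsupp, hhom⟩ =>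
    SimpleGraph.ConnectedComponent.lift
      (fun v => (h v.1).get (Option.ne_none_iff_isSome.mp ((hsupp v.1).mpr v.2)))
      (by
        intro v w p hp
        clear hp
        induction p with
        | nil => rfl
        | @cons a b c hadj p ih =>
          refine Eq.trans ?_ ih
          have hadj' : G.Adj a.1 b.1 := hadj
          have h1 : h a.1 ≠ none := (hsupp a.1).mpr a.2
          have h2 : h b.1 ≠ none := (hsupp b.1).mpr b.2
          have heq : h a.1 = h b.1 := by
            rcases hhom a.1 b.1 hadj' with h' | h' | h' <;> first | exact absurd h' ‹_› | exact h'
          apply Option.some_injective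
          rw [Option.some_get, Option.some_get, heq])
  invFun := fun c =>
    ⟨fun v => if hv : v ∈ A then
        some (c ((G.induce (A : Set V)).connectedComponentMk ⟨v, hv⟩)) else none,
      fun v => by by_cases hv : v ∈ A <;> simp [hv],
      by
        intro u v huv
        by_cases hu : u ∈ A
        · by_cases hv : v ∈ A
          · refine Or.inr (Or.inr ?_)
            have h' : (G.induce (A : Set V)).Adj ⟨u, hu⟩ ⟨v, hv⟩ := huv
            simp only [dif_pos hu, dif_pos hv,
              SimpleGraph.ConnectedComponent.connectedComponentMk_eq_of_adj h']
          · exact Or.inr (Or.inl (dif_neg hv))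
        · exact Or.inl (dif_neg hu)⟩
  left_inv := by
    rintro ⟨h, hsupp, hhom⟩
    apply Subtype.ext
    funext v
    by_cases hv : v ∈ A
    · simp only [dif_pos hv]
      rw [SimpleGraph.ConnectedComponent.lift_mk]
      exact Option.some_get _
    · simp only [dif_neg hv]
      exact (not_ne_iff.mp (mt (hsupp v).mp hv)).symm
  right_inv := by
    intro c
    funext comp
    induction comp using SimpleGraph.ConnectedComponent.ind with
    | _ v =>
      have hv : v.1 ∈ A := v.2
      simp only [SimpleGraph.ConnectedComponent.lift_mk, dif_pos hv, Option.get_some]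

lemma card_homs :
    (univ.filter (fun h : V → Option (Fin y) =>
        (∀ v, h v ≠ none ↔ v ∈ A) ∧ ∀ u v, G.Adj u v → starAdj (h u) (h v))).card
      = y ^ numComponents (G.induce (A : Set V)) := by
  classical
  rw [← Fintype.card_subtype]
  rw [Fintype.card_congr (homEquiv G y A)]
  rw [Fintype.card_fun, Fintype.card_fin]
  congr 1
  rw [numComponents, Nat.card_eq_fintype_card]

end Aux
theorem stmt14 {V : Type*} [Fintype V] (G : SimpleGraph V) (x : ℝ) (y : ℕ) :
    (∑ h : V → Option (Fin y),
        if ∀ u v : V, G.Adj u v → starAdj (h u) (h v) then ∏ v : V, starWeight x (h v) else 0)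
      = Q G x (y : ℝ) := by
  classical
  rw [Q]
  rw [← Finset.sum_fiberwise_of_maps_to (t := (univ : Finset (Finset V)))
      (g := fun h : V → Option (Fin y) => univ.filter (fun v => h v ≠ none))
      (fun h _ => Finset.mem_univ _)
      (fun h => if ∀ u v : V, G.Adj u v → starAdj (h u) (h v)
        then ∏ v : V, starWeight x (h v) else 0)]
  refine Finset.sum_congr rfl ?_
  intro A _
  rw [Finset.sum_filter]
  have step1 : ∀ h : V → Option (Fin y),
      (if univ.filter (fun v => h v ≠ none) = A then
        (if ∀ u v, G.Adj u v → starAdj (h u) (h v) then ∏ v, starWeight x (h v) else 0) else 0)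
      = if (univ.filter (fun v => h v ≠ none) = A ∧ ∀ u v, G.Adj u v → starAdj (h u) (h v))
          then x ^ A.card else 0 := by
    intro h
    by_cases h1 : univ.filter (fun v => h v ≠ none) = A
    · by_cases h2 : ∀ u v, G.Adj u v → starAdj (h u) (h v)
      · rw [if_pos h1, if_pos h2, if_pos ⟨h1, h2⟩]
        calc ∏ v, starWeight x (h v)
            = ∏ v ∈ univ.filter (fun v => ¬ h v = none), x := by
              rw [Finset.prod_filter]
              refine Finset.prod_congr rfl fun v _ => ?_
              rw [starWeight, ite_not]
          _ = x ^ A.card := by rw [h1, Finset.prod_const]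
      · simp [h1, h2]
    · simp [h1]
  simp_rw [step1]
  rw [← Finset.sum_filter, Finset.sum_const]
  have hfe : univ.filter (fun h : V → Option (Fin y) =>
      univ.filter (fun v => h v ≠ none) = A ∧ ∀ u v, G.Adj u v → starAdj (h u) (h v))
    = univ.filter (fun h : V → Option (Fin y) =>
      (∀ v, h v ≠ none ↔ v ∈ A) ∧ ∀ u v, G.Adj u v → starAdj (h u) (h v)) := by
    apply Finset.filter_congr
    intro h _
    constructor
    · rintro ⟨h1, h2⟩
      refine ⟨fun v => ?_, h2⟩
      rw [← h1]
      simp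
    · rintro ⟨h1, h2⟩
      refine ⟨?_, h2⟩
      ext v
      simp [h1 v]
  rw [hfe, card_homs, nsmul_eq_mul]
  push_cast
  ring
end

section
/- Let G and H be finite simple graphs on disjoint vertex sets with |V(G)|=s and |V(H)|=t. Then Q(G∨H;x,y) = Q(G;x,y) + Q(H;x,y) + [(1+x)^s − 1]·[(1+x)^t − 1]·y − 1, where G∨H is the join of G and H. -/
open Finset
open scoped Classical

/-- The join of two simple graphs: the disjoint union together with all edges
between the two sides. -/
def joinGraph {V W : Type*} (G : SimpleGraph V) (H : SimpleGraph W) :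
    SimpleGraph (V ⊕ W) where
  Adj a b :=
    match a, b with
    | .inl u, .inl v => G.Adj u v
    | .inr u, .inr v => H.Adj u v
    | _, _ => True
  symm := ⟨by
    rintro (u | u) (v | v) h <;> simp_all [SimpleGraph.adj_comm]⟩
  loopless := ⟨by
    rintro (u | u) h
    · exact G.loopless.irrefl _ h
    · exact H.loopless.irrefl _ h⟩

lemma numComponents_iso {V W : Type*} {G : SimpleGraph V} {H : SimpleGraph W}
    (e : G ≃g H) : numComponents G = numComponents H :=
  Nat.card_congr e.connectedComponentEquiv

lemma numComponents_of_isEmpty {V : Type*} [IsEmpty V] (G : SimpleGraph V) :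
    numComponents G = 0 := by
  have : IsEmpty G.ConnectedComponent := ⟨fun c => c.ind (fun v => isEmptyElim v)⟩
  exact Nat.card_of_isEmpty

lemma numComponents_of_connected {V : Type*} {G : SimpleGraph V} (h : G.Connected) :
    numComponents G = 1 := by
  refine Nat.card_eq_one_iff_unique.mpr ⟨⟨?_⟩, h.nonempty.map G.connectedComponentMk⟩
  exact SimpleGraph.ConnectedComponent.ind₂
    (fun u v => SimpleGraph.ConnectedComponent.eq.mpr (h.preconnected u v))

lemma sum_x_pow {V : Type*} [Fintype V] (x : ℝ) :
    ∑ A : Finset V, x ^ A.card = (1 + x) ^ Fintype.card V := by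
  have := Fintype.prod_add (fun _ : V => x) (fun _ : V => 1)
  simp only [prod_const, one_pow, mul_one, Finset.card_univ] at this
  rw [add_comm 1 x, ← this]

lemma numComponents_inl {V W : Type*} (G : SimpleGraph V) (H : SimpleGraph W)
    (A : Finset V) :
    numComponents ((joinGraph G H).induce ((A.disjSum (∅ : Finset W) : Finset (V ⊕ W)) : Set (V ⊕ W))) =
      numComponents (G.induce (A : Set V)) := by
  refine (numComponents_iso ⟨?_, ?_⟩).symm
  · exact {
      toFun := fun a => ⟨Sum.inl a.1, by simpa using a.2⟩
      invFun := fun p => match p with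
        | ⟨Sum.inl a, h⟩ => ⟨a, by simpa using h⟩
        | ⟨Sum.inr b, h⟩ => absurd (by simpa using h) (Finset.notMem_empty b)
      left_inv := fun a => rfl
      right_inv := fun p => by
        rcases p with ⟨(a | b), h⟩
        · rfl
        · exact absurd (by simpa using h) (Finset.notMem_empty b) }
  · intro a b
    exact Iff.rfl

lemma numComponents_inr {V W : Type*} (G : SimpleGraph V) (H : SimpleGraph W)
    (B : Finset W) :
    numComponents ((joinGraph G H).induce (((∅ : Finset V).disjSum B : Finset (V ⊕ W)) : Set (V ⊕ W))) =
      numComponents (H.induce (B : Set W)) := by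
  refine (numComponents_iso ⟨?_, ?_⟩).symm
  · exact {
      toFun := fun a => ⟨Sum.inr a.1, by simpa using a.2⟩
      invFun := fun p => match p with
        | ⟨Sum.inr b, h⟩ => ⟨b, by simpa using h⟩
        | ⟨Sum.inl a, h⟩ => absurd (by simpa using h) (Finset.notMem_empty a)
      left_inv := fun a => rfl
      right_inv := fun p => by
        rcases p with ⟨(a | b), h⟩
        · exact absurd (by simpa using h) (Finset.notMem_empty a)
        · rfl }
  · intro a b
    exact Iff.rfl

lemma numComponents_both {V W : Type*} (G : SimpleGraph V) (H : SimpleGraph W)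
    {A : Finset V} {B : Finset W} (hA : A.Nonempty) (hB : B.Nonempty) :
    numComponents ((joinGraph G H).induce ((A.disjSum B : Finset (V ⊕ W)) : Set (V ⊕ W))) = 1 := by
  obtain ⟨a0, ha0⟩ := hA
  obtain ⟨b0, hb0⟩ := hB
  apply numComponents_of_connected
  have hadj : ∀ (a : V) (b : W) (ha : Sum.inl a ∈ (A.disjSum B : Finset (V ⊕ W)))
      (hb : Sum.inr b ∈ (A.disjSum B : Finset (V ⊕ W))),
      ((joinGraph G H).induce ((A.disjSum B : Finset (V ⊕ W)) : Set (V ⊕ W))).Adj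
        ⟨Sum.inl a, ha⟩ ⟨Sum.inr b, hb⟩ := by
    intro a b ha hb
    trivial
  rw [SimpleGraph.connected_iff]
  refine ⟨?_, ?_⟩
  · rintro ⟨(u | u), hu⟩ ⟨(v | v), hv⟩
    · have hb : Sum.inr b0 ∈ (A.disjSum B : Finset (V ⊕ W)) := by simpa using hb0
      exact ((hadj u b0 hu hb).reachable).trans ((hadj v b0 hv hb).symm.reachable)
    · exact (hadj u v hu hv).reachable
    · exact (hadj v u hv hu).symm.reachable
    · have ha : Sum.inl a0 ∈ (A.disjSum B : Finset (V ⊕ W)) := by simpa using ha0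
      exact ((hadj a0 u ha hu).symm.reachable).trans ((hadj a0 v ha hv).reachable)
  · exact ⟨⟨Sum.inl a0, by simpa using ha0⟩⟩

theorem stmt15 {V W : Type*} [Fintype V] [Fintype W]
    (G : SimpleGraph V) (H : SimpleGraph W) (x y : ℝ) :
    Q (joinGraph G H) x y =
      Q G x y + Q H x y +
        ((1 + x) ^ Fintype.card V - 1) * ((1 + x) ^ Fintype.card W - 1) * y - 1 := by
  classical
  set F : Finset V → Finset W → ℝ := fun A B =>
    x ^ (A.disjSum B).card *
      y ^ numComponents ((joinGraph G H).induce ((A.disjSum B : Finset (V ⊕ W)) : Set (V ⊕ W)))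
    with hF
  have h1 : Q (joinGraph G H) x y = ∑ p : Finset V × Finset W, F p.1 p.2 := by
    rw [Q]
    exact (Fintype.sum_equiv
      (⟨fun p => p.1.disjSum p.2, fun u => (u.toLeft, u.toRight), fun p => by simp,
        fun u => by simp [Finset.toLeft_disjSum_toRight]⟩ :
          Finset V × Finset W ≃ Finset (V ⊕ W)) (fun p => F p.1 p.2)
      (fun (u : Finset (V ⊕ W)) =>
        x ^ u.card * y ^ numComponents ((joinGraph G H).induce (↑u : Set (V ⊕ W))))
      (fun p => rfl)).symm
  rw [h1, Fintype.sum_prod_type]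
  have hsplitW : ∀ A : Finset V, (∑ B : Finset W, F A B) =
      F A ∅ + ∑ B ∈ (univ : Finset (Finset W)).erase ∅, F A B := by
    intro A
    exact (Finset.add_sum_erase univ (F A) (mem_univ ∅)).symm
  have key : ∀ A : Finset V, F A ∅ = x ^ A.card * y ^ numComponents (G.induce (A : Set V)) := by
    intro A
    rw [hF]
    simp only [numComponents_inl G H A, Finset.card_disjSum, Finset.card_empty, add_zero]
  have keyR : ∀ B : Finset W, F ∅ B = x ^ B.card * y ^ numComponents (H.induce (B : Set W)) := by
    intro B
    rw [hF]
    simp only [numComponents_inr G H B, Finset.card_disjSum, Finset.card_empty, zero_add]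
  simp only [hsplitW]
  rw [Finset.sum_add_distrib]
  have hQG : ∑ A : Finset V, F A ∅ = Q G x y := by
    rw [Q]; exact Finset.sum_congr rfl fun A _ => key A
  rw [hQG]
  -- second sum: split off A = ∅
  rw [← Finset.add_sum_erase _ (fun A => ∑ B ∈ (univ : Finset (Finset W)).erase ∅, F A B)
    (mem_univ (∅ : Finset V))]
  have hQH : ∑ B ∈ (univ : Finset (Finset W)).erase ∅, F ∅ B = Q H x y - 1 := by
    have : Q H x y = F ∅ ∅ + ∑ B ∈ (univ : Finset (Finset W)).erase ∅, F ∅ B := by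
      rw [Q, ← Finset.add_sum_erase _ _ (mem_univ (∅ : Finset W))]
      congr 1
      · exact (keyR ∅).symm
      · exact Finset.sum_congr rfl fun B _ => (keyR B).symm
    have hF00 : F ∅ ∅ = 1 := by
      rw [keyR]
      have : IsEmpty ((((∅ : Finset W) : Set W)) : Type _) := by
        simp only [Finset.coe_empty]; exact Set.isEmpty_coe_sort.mpr rfl
      rw [numComponents_of_isEmpty]
      simp
    rw [this, hF00]; ring
  rw [hQH]
  have hboth : ∑ A ∈ (univ : Finset (Finset V)).erase ∅,
      ∑ B ∈ (univ : Finset (Finset W)).erase ∅, F A B =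
      ((1 + x) ^ Fintype.card V - 1) * ((1 + x) ^ Fintype.card W - 1) * y := by
    have : ∀ A ∈ (univ : Finset (Finset V)).erase ∅, ∀ B ∈ (univ : Finset (Finset W)).erase ∅,
        F A B = (x ^ A.card) * (x ^ B.card * y) := by
      intro A hA B hB
      have hA' : A.Nonempty := Finset.nonempty_iff_ne_empty.mpr (Finset.ne_of_mem_erase hA)
      have hB' : B.Nonempty := Finset.nonempty_iff_ne_empty.mpr (Finset.ne_of_mem_erase hB)
      rw [hF]
      simp only [numComponents_both G H hA' hB', Finset.card_disjSum, pow_add, pow_one]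
      ring
    rw [Finset.sum_congr rfl (fun A hA => Finset.sum_congr rfl (fun B hB => this A hA B hB))]
    have hV : ∑ A ∈ (univ : Finset (Finset V)).erase ∅, x ^ A.card =
        (1 + x) ^ Fintype.card V - 1 := by
      rw [eq_sub_iff_add_eq, ← sum_x_pow (V := V) x,
        ← Finset.add_sum_erase _ _ (mem_univ (∅ : Finset V))]
      simp [add_comm]
    have hW : ∑ B ∈ (univ : Finset (Finset W)).erase ∅, x ^ B.card =
        (1 + x) ^ Fintype.card W - 1 := by
      rw [eq_sub_iff_add_eq, ← sum_x_pow (V := W) x,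
        ← Finset.add_sum_erase _ _ (mem_univ (∅ : Finset W))]
      simp [add_comm]
    rw [← Finset.sum_mul_sum, hV, ← Finset.sum_mul, hW, mul_assoc]
  rw [hboth]
  ring
end

section
/- For the complete bipartite graph K_{s,t}, Q(K_{s,t};x,y) = (1+xy)^s + (1+xy)^t + [(1+x)^s − 1]·[(1+x)^t − 1]·y − 1. -/
open Finset
open scoped Classical

lemma numComponents_bot (V : Type*) :
    numComponents (⊥ : SimpleGraph V) = Nat.card V := by
  have hb : Function.Bijective ((⊥ : SimpleGraph V).connectedComponentMk) := by
    constructor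
    · intro a b h
      exact (SimpleGraph.reachable_bot).mp (SimpleGraph.ConnectedComponent.exact h)
    · intro c
      exact c.ind fun v => ⟨v, rfl⟩
  exact (Nat.card_eq_of_bijective _ hb).symm

lemma sum_pow_card (n : ℕ) (z : ℝ) :
    ∑ B : Finset (Fin n), z ^ B.card = (1 + z) ^ n := by
  have h := Finset.prod_add (fun _ : Fin n => z) (fun _ : Fin n => (1 : ℝ)) Finset.univ
  simp only [Finset.prod_const, one_pow, mul_one] at h
  rw [add_comm 1 z]
  simpa [Finset.powerset_univ, Finset.card_univ] using h.symm

lemma key (s t : ℕ) (B : Finset (Fin s)) (C : Finset (Fin t)) :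
    numComponents ((completeBipartiteGraph (Fin s) (Fin t)).induce
        ((B.disjSum C : Finset (Fin s ⊕ Fin t)) : Set (Fin s ⊕ Fin t))) =
      if B = ∅ ∨ C = ∅ then B.card + C.card else 1 := by
  by_cases hBC : B = ∅ ∨ C = ∅
  · rw [if_pos hBC]
    have hbot : (completeBipartiteGraph (Fin s) (Fin t)).induce
        ((B.disjSum C : Finset (Fin s ⊕ Fin t)) : Set (Fin s ⊕ Fin t)) = ⊥ := by
      ext u v
      simp only [SimpleGraph.comap_adj, completeBipartiteGraph_adj,
        SimpleGraph.bot_adj, iff_false, Function.Embedding.coe_subtype]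
      obtain ⟨a | a, ha⟩ := u <;> obtain ⟨b2 | b2, hb2⟩ := v <;>
        simp only [Finset.mem_coe, Finset.inl_mem_disjSum, Finset.inr_mem_disjSum]
          at ha hb2 <;>
        rcases hBC with h | h <;>
        simp_all [Sum.isLeft, Sum.isRight]
    rw [hbot, numComponents_bot, Nat.card_coe_set_eq, Set.ncard_coe_finset,
      Finset.card_disjSum]
  · rw [if_neg hBC]
    push_neg at hBC
    obtain ⟨hB, hC⟩ := hBC
    obtain ⟨b, hb⟩ := hB
    obtain ⟨c, hc⟩ := hC
    apply numComponents_of_connected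
    have hbm : (Sum.inl b : Fin s ⊕ Fin t) ∈
        ((B.disjSum C : Finset (Fin s ⊕ Fin t)) : Set (Fin s ⊕ Fin t)) := by
      simp [hb]
    have hcm : (Sum.inr c : Fin s ⊕ Fin t) ∈
        ((B.disjSum C : Finset (Fin s ⊕ Fin t)) : Set (Fin s ⊕ Fin t)) := by
      simp [hc]
    set G := (completeBipartiteGraph (Fin s) (Fin t)).induce
        ((B.disjSum C : Finset (Fin s ⊕ Fin t)) : Set (Fin s ⊕ Fin t)) with hG
    have hadj : ∀ (u v : ((B.disjSum C : Finset (Fin s ⊕ Fin t)) : Set (Fin s ⊕ Fin t))),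
        (u : Fin s ⊕ Fin t).isLeft → (v : Fin s ⊕ Fin t).isRight → G.Adj u v := by
      intro u v hu hv
      simp only [hG, SimpleGraph.comap_adj, completeBipartiteGraph_adj]
      exact Or.inl ⟨hu, hv⟩
    haveI : Nonempty ((B.disjSum C : Finset (Fin s ⊕ Fin t)) : Set (Fin s ⊕ Fin t)) :=
      ⟨⟨Sum.inl b, hbm⟩⟩
    constructor
    intro u v
    obtain ⟨ul | ur, hu⟩ := u <;> obtain ⟨vl | vr, hv⟩ := v
    · have h1 : G.Adj ⟨Sum.inl ul, hu⟩ ⟨Sum.inr c, hcm⟩ :=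
        hadj ⟨Sum.inl ul, hu⟩ ⟨Sum.inr c, hcm⟩ rfl rfl
      have h2 : G.Adj ⟨Sum.inl vl, hv⟩ ⟨Sum.inr c, hcm⟩ :=
        hadj ⟨Sum.inl vl, hv⟩ ⟨Sum.inr c, hcm⟩ rfl rfl
      exact h1.reachable.trans h2.reachable.symm
    · exact (hadj ⟨Sum.inl ul, hu⟩ ⟨Sum.inr vr, hv⟩ rfl rfl).reachable
    · exact ((hadj ⟨Sum.inl vl, hv⟩ ⟨Sum.inr ur, hu⟩ rfl rfl).reachable).symm
    · have h1 : G.Adj ⟨Sum.inl b, hbm⟩ ⟨Sum.inr ur, hu⟩ :=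
        hadj ⟨Sum.inl b, hbm⟩ ⟨Sum.inr ur, hu⟩ rfl rfl
      have h2 : G.Adj ⟨Sum.inl b, hbm⟩ ⟨Sum.inr vr, hv⟩ :=
        hadj ⟨Sum.inl b, hbm⟩ ⟨Sum.inr vr, hv⟩ rfl rfl
      exact h1.reachable.symm.trans h2.reachable

theorem stmt16 (s t : ℕ) (x y : ℝ) :
    Q (completeBipartiteGraph (Fin s) (Fin t)) x y =
      (1 + x * y) ^ s + (1 + x * y) ^ t +
        ((1 + x) ^ s - 1) * ((1 + x) ^ t - 1) * y - 1 := by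
  classical
  have hbij : Function.Bijective
      (fun p : Finset (Fin s) × Finset (Fin t) => p.1.disjSum p.2) := by
    constructor
    · intro p q h
      obtain ⟨h1, h2⟩ := Finset.Injective2_disjSum h
      exact Prod.ext h1 h2
    · intro A
      exact ⟨(A.toLeft, A.toRight), Finset.toLeft_disjSum_toRight⟩
  rw [Q, ← Fintype.sum_bijective _ hbij
    (fun p : Finset (Fin s) × Finset (Fin t) =>
      x ^ (p.1.disjSum p.2).card * y ^ numComponents
        ((completeBipartiteGraph (Fin s) (Fin t)).induce
          ((p.1.disjSum p.2 : Finset (Fin s ⊕ Fin t)) : Set (Fin s ⊕ Fin t))))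
    _ (fun p => rfl)]
  rw [Fintype.sum_prod_type]
  have hterm : ∀ (B : Finset (Fin s)) (C : Finset (Fin t)),
      x ^ (B.disjSum C).card * y ^ numComponents
        ((completeBipartiteGraph (Fin s) (Fin t)).induce
          ((B.disjSum C : Finset (Fin s ⊕ Fin t)) : Set (Fin s ⊕ Fin t))) =
      if B = ∅ ∨ C = ∅ then (x * y) ^ (B.card + C.card)
      else x ^ (B.card + C.card) * y := by
    intro B C
    rw [key, Finset.card_disjSum]
    split_ifs
    · rw [mul_pow]
    · rw [pow_one]
  simp only [hterm]
  have split : ∀ (n : ℕ) (f : Finset (Fin n) → ℝ),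
      ∑ B : Finset (Fin n), f B = f ∅ + ∑ B ∈ Finset.univ.erase ∅, f B := by
    intro n f
    rw [Finset.add_sum_erase _ f (Finset.mem_univ ∅)]
  rw [split _ _]
  have inner_empty : ∑ C : Finset (Fin t),
      (if (∅ : Finset (Fin s)) = ∅ ∨ C = ∅ then
          (x * y) ^ ((∅ : Finset (Fin s)).card + C.card)
        else x ^ ((∅ : Finset (Fin s)).card + C.card) * y) = (1 + x * y) ^ t := by
    simp only [eq_self_iff_true, true_or, if_pos, Finset.card_empty, zero_add]
    exact sum_pow_card t (x * y)
  rw [inner_empty]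
  have inner_ne : ∀ B : Finset (Fin s), B ≠ ∅ →
      ∑ C : Finset (Fin t),
        (if B = ∅ ∨ C = ∅ then (x * y) ^ (B.card + C.card)
          else x ^ (B.card + C.card) * y) =
      (x * y) ^ B.card + x ^ B.card * ((1 + x) ^ t - 1) * y := by
    intro B hB
    rw [split _ _]
    simp only [hB, false_or, Finset.card_empty, add_zero, eq_self_iff_true, if_pos]
    have hc : ∀ C ∈ Finset.univ.erase (∅ : Finset (Fin t)),
        (if C = ∅ then (x * y) ^ (B.card + C.card)
          else x ^ (B.card + C.card) * y) = x ^ B.card * x ^ C.card * y := by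
      intro C hC
      rw [if_neg (Finset.mem_erase.mp hC).1, pow_add]
    rw [Finset.sum_congr rfl hc]
    have h3 : ∑ C ∈ Finset.univ.erase (∅ : Finset (Fin t)), x ^ B.card * x ^ C.card * y
        = x ^ B.card * ((1 + x) ^ t - 1) * y := by
      rw [← Finset.sum_mul, ← Finset.mul_sum]
      congr 2
      have h4 := split t (fun C => x ^ C.card)
      rw [sum_pow_card] at h4
      simp only [Finset.card_empty, pow_zero] at h4
      linarith
    rw [h3]
  rw [Finset.sum_congr rfl (fun B hB => inner_ne B (Finset.mem_erase.mp hB).1)]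
  rw [Finset.sum_add_distrib]
  have h1 : ∑ B ∈ Finset.univ.erase (∅ : Finset (Fin s)), (x * y) ^ B.card
      = (1 + x * y) ^ s - 1 := by
    have h5 := split s (fun B => (x * y) ^ B.card)
    rw [sum_pow_card] at h5
    simp only [Finset.card_empty, pow_zero] at h5
    linarith
  have h2 : ∑ B ∈ Finset.univ.erase (∅ : Finset (Fin s)),
      x ^ B.card * ((1 + x) ^ t - 1) * y = ((1 + x) ^ s - 1) * ((1 + x) ^ t - 1) * y := by
    rw [← Finset.sum_mul, ← Finset.sum_mul]
    congr 2
    have h6 := split s (fun B => x ^ B.card)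
    rw [sum_pow_card] at h6
    simp only [Finset.card_empty, pow_zero] at h6
    linarith
  rw [h1, h2]
  ring
end

section
/- Let v be an articulation (cut vertex) of a graph G, and let H and K be subgraphs with G = H ∪ K and H ∩ K = ({v},∅). Then xy·Q(G;x,y) = xy·Q(H−v;x,y)·Q(K−v;x,y) + [Q(H;x,y) − Q(H−v;x,y)]·[Q(K;x,y) − Q(K−v;x,y)]. -/
open Finset
open scoped Classical

namespace Aux
variable {V : Type*}

/-- Lift a function constant on adjacent vertices to connected components. -/
def ccLiftAdj {G : SimpleGraph V} {β : Sort*} (f : V → β)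
    (h : ∀ a b, G.Adj a b → f a = f b) : G.ConnectedComponent → β :=
  SimpleGraph.ConnectedComponent.lift f fun a b p hp => by
    clear hp
    induction p with
    | nil => rfl
    | cons hadj q ih => exact (h _ _ hadj).trans ih

@[simp] lemma ccLiftAdj_mk {G : SimpleGraph V} {β : Sort*} (f : V → β)
    (h : ∀ a b, G.Adj a b → f a = f b) (u : V) :
    ccLiftAdj f h (G.connectedComponentMk u) = f u := rfl

lemma numComponents_iso {W : Type*} {G : SimpleGraph V} {G' : SimpleGraph W} (φ : G ≃g G') :
    numComponents G = numComponents G' :=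
  Nat.card_congr φ.connectedComponentEquiv

lemma memW {W : Set V} {A : Set ↥W} (b : ↥(Subtype.val '' A)) : (b : V) ∈ W := by
  obtain ⟨a, _, h⟩ := b.2; exact h ▸ a.2

lemma memA {W : Set V} {A : Set ↥W} (b : ↥(Subtype.val '' A)) :
    (⟨(b : V), memW b⟩ : ↥W) ∈ A := by
  obtain ⟨a, ha, h⟩ := b.2
  exact (Subtype.ext h : a = ⟨(b : V), memW b⟩) ▸ ha

/-- Induced subgraph of an induced subgraph is induced on the image. -/
def valImageIso (G : SimpleGraph V) (W : Set V) (A : Set ↥W) :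
    (G.induce W).induce A ≃g G.induce (Subtype.val '' A) where
  toFun a := ⟨a.1.1, a.1, a.2, rfl⟩
  invFun b := ⟨⟨(b : V), memW b⟩, memA b⟩
  left_inv a := Subtype.ext (Subtype.ext rfl)
  right_inv b := Subtype.ext rfl
  map_rel_iff' := Iff.rfl

lemma numComponents_induce_induce (G : SimpleGraph V) (W : Set V) (A : Set ↥W) :
    numComponents ((G.induce W).induce A) = numComponents (G.induce (Subtype.val '' A)) :=
  numComponents_iso (valImageIso G W A)

lemma Q_induce [Fintype V] (G : SimpleGraph V) (W : Set V) [Fintype ↥W] (x y : ℝ) :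
    Q (G.induce W) x y
      = ∑ T ∈ W.toFinset.powerset, x ^ T.card * y ^ numComponents (G.induce (T : Set V)) := by
  rw [Q]
  refine Finset.sum_nbij' (fun A => A.map (Function.Embedding.subtype _))
    (fun T => T.subtype (· ∈ W)) ?_ ?_ ?_ ?_ ?_
  · intro A _
    simp only [Finset.mem_powerset]
    intro u hu
    simp only [Finset.mem_map, Function.Embedding.coe_subtype] at hu
    obtain ⟨a, _, rfl⟩ := hu
    simpa using a.2
  · intro T _; exact Finset.mem_univ _
  · intro A _
    ext a
    simp
  · intro T hT
    show (T.subtype (· ∈ W)).map (Function.Embedding.subtype _) = T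
    rw [Finset.subtype_map, Finset.filter_true_of_mem]
    intro u hu
    simpa using Finset.mem_powerset.mp hT hu
  · intro A _
    have hset : ((A.map (Function.Embedding.subtype (· ∈ W)) : Finset V) : Set V)
        = Subtype.val '' (A : Set ↥W) := by
      simp [Finset.coe_map]
    rw [Finset.card_map, numComponents_induce_induce, hset]



/-- Components of a disconnected union split as a sum. -/
noncomputable def unionCompEquiv (G : SimpleGraph V) (S T : Set V)
    (hd : ∀ u : V, u ∈ S → u ∈ T → False)
    (he : ∀ u w : V, u ∈ S → w ∈ T → ¬ G.Adj u w) :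
    (G.induce (S ∪ T)).ConnectedComponent ≃
      (G.induce S).ConnectedComponent ⊕ (G.induce T).ConnectedComponent where
  toFun := SimpleGraph.ConnectedComponent.lift
    (fun u => if hu : (u : V) ∈ S then Sum.inl ((G.induce S).connectedComponentMk ⟨u, hu⟩)
      else Sum.inr ((G.induce T).connectedComponentMk ⟨u, u.2.resolve_left hu⟩))
    (by
      intro a b p hp
      clear hp
      induction p with
      | nil => rfl
      | cons hadj q ih =>
        refine Eq.trans ?_ ih
        rename_i c d _
        have hcd : G.Adj (c : V) (d : V) := hadj
        by_cases hc : (c : V) ∈ S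
        · by_cases hdS : (d : V) ∈ S
          · simp only [dif_pos hc, dif_pos hdS]
            exact congrArg _ (SimpleGraph.ConnectedComponent.connectedComponentMk_eq_of_adj (by exact hcd))
          · exact absurd hcd (he _ _ hc (d.2.resolve_left hdS))
        · by_cases hdS : (d : V) ∈ S
          · exact absurd hcd.symm (he _ _ hdS (c.2.resolve_left hc))
          · simp only [dif_neg hc, dif_neg hdS]
            exact congrArg _ (SimpleGraph.ConnectedComponent.connectedComponentMk_eq_of_adj (by exact hcd)))
  invFun := Sum.elim
    (SimpleGraph.ConnectedComponent.map (G.induceHomOfLE Set.subset_union_left).toHom)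
    (SimpleGraph.ConnectedComponent.map (G.induceHomOfLE Set.subset_union_right).toHom)
  left_inv := by
    refine SimpleGraph.ConnectedComponent.ind ?_
    intro u
    by_cases hu : (u : V) ∈ S
    · simp only [SimpleGraph.ConnectedComponent.lift_mk, dif_pos hu, Sum.elim_inl,
        SimpleGraph.ConnectedComponent.map_mk]
      congr 1
    · simp only [SimpleGraph.ConnectedComponent.lift_mk, dif_neg hu, Sum.elim_inr,
        SimpleGraph.ConnectedComponent.map_mk]
      congr 1
  right_inv := by
    rintro (c | c)
    · induction c using SimpleGraph.ConnectedComponent.ind with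
      | _ u =>
        simp only [Sum.elim_inl, SimpleGraph.ConnectedComponent.map_mk,
          SimpleGraph.ConnectedComponent.lift_mk]
        split_ifs with h
        · exact congrArg _ (congrArg _ (Subtype.ext rfl))
        · exact absurd u.2 h
    · induction c using SimpleGraph.ConnectedComponent.ind with
      | _ u =>
        simp only [Sum.elim_inr, SimpleGraph.ConnectedComponent.map_mk,
          SimpleGraph.ConnectedComponent.lift_mk]
        split_ifs with h
        · exact (hd _ h u.2).elim
        · exact congrArg _ (congrArg _ (Subtype.ext rfl))

/-- Components of a union glued at a single vertex `v`. -/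
noncomputable def mergeCompEquiv (G : SimpleGraph V) (S T : Set V) (v : V)
    (hvS : v ∈ S) (hvT : v ∈ T) (hST : ∀ u : V, u ∈ S → u ∈ T → u = v)
    (he : ∀ u w : V, G.Adj u w → u ∈ S ∪ T → w ∈ S ∪ T →
      (u ∈ S ∧ w ∈ S) ∨ (u ∈ T ∧ w ∈ T)) :
    (G.induce (S ∪ T)).ConnectedComponent ≃
      (G.induce S).ConnectedComponent ⊕
        {c : (G.induce T).ConnectedComponent //
          c ≠ (G.induce T).connectedComponentMk ⟨v, hvT⟩} where
  toFun := SimpleGraph.ConnectedComponent.lift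
    (fun u => if hu : (u : V) ∈ S then Sum.inl ((G.induce S).connectedComponentMk ⟨u, hu⟩)
      else if hc : (G.induce T).connectedComponentMk ⟨u, u.2.resolve_left hu⟩
          = (G.induce T).connectedComponentMk ⟨v, hvT⟩ then
        Sum.inl ((G.induce S).connectedComponentMk ⟨v, hvS⟩)
      else Sum.inr ⟨(G.induce T).connectedComponentMk ⟨u, u.2.resolve_left hu⟩, hc⟩)
    (by
      intro a b p hp
      clear hp
      induction p with
      | nil => rfl
      | cons hadj q ih =>
        refine Eq.trans ?_ ih
        rename_i c d _
        beta_reduce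
        have hcd : G.Adj (c : V) (d : V) := hadj
        rcases he _ _ hcd c.2 d.2 with ⟨hcS, hdS⟩ | ⟨hcT, hdT⟩
        · rw [dif_pos hcS, dif_pos hdS]
          exact congrArg _
            (SimpleGraph.ConnectedComponent.connectedComponentMk_eq_of_adj (by exact hcd))
        · have hTT : (G.induce T).connectedComponentMk ⟨c, hcT⟩
              = (G.induce T).connectedComponentMk ⟨d, hdT⟩ :=
            SimpleGraph.ConnectedComponent.connectedComponentMk_eq_of_adj (by exact hcd)
          by_cases hcS : (c : V) ∈ S <;> by_cases hdS : (d : V) ∈ S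
          · have : (c : V) = (d : V) := (hST _ hcS hcT).trans (hST _ hdS hdT).symm
            exact (G.loopless.irrefl _ (this ▸ hcd)).elim
          · -- c = v, d ∈ T \ S
            have hcv : (c : V) = v := hST _ hcS hcT
            rw [dif_pos hcS, dif_neg hdS]
            have hdv : (G.induce T).connectedComponentMk ⟨d, d.2.resolve_left hdS⟩
                = (G.induce T).connectedComponentMk ⟨v, hvT⟩ := by
              rw [← hTT]
              exact congrArg _ (Subtype.ext hcv)
            rw [dif_pos hdv]
            exact congrArg _ (congrArg _ (Subtype.ext hcv))
          · -- d = v, c ∈ T \ S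
            have hdv : (d : V) = v := hST _ hdS hdT
            rw [dif_neg hcS, dif_pos hdS]
            have hcv : (G.induce T).connectedComponentMk ⟨c, c.2.resolve_left hcS⟩
                = (G.induce T).connectedComponentMk ⟨v, hvT⟩ := by
              rw [hTT]
              exact congrArg _ (Subtype.ext hdv)
            rw [dif_pos hcv]
            exact congrArg _ (congrArg _ (Subtype.ext hdv.symm))
          · rw [dif_neg hcS, dif_neg hdS]
            have hTT' : (G.induce T).connectedComponentMk ⟨c, c.2.resolve_left hcS⟩
                = (G.induce T).connectedComponentMk ⟨d, d.2.resolve_left hdS⟩ := hTT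
            by_cases hc : (G.induce T).connectedComponentMk ⟨c, c.2.resolve_left hcS⟩
                = (G.induce T).connectedComponentMk ⟨v, hvT⟩
            · rw [dif_pos hc, dif_pos (hTT' ▸ hc)]
            · rw [dif_neg hc, dif_neg (hTT' ▸ hc)]
              exact congrArg _ (Subtype.ext hTT'))
  invFun := Sum.elim
    (SimpleGraph.ConnectedComponent.map (G.induceHomOfLE Set.subset_union_left).toHom)
    (fun p => SimpleGraph.ConnectedComponent.map
      (G.induceHomOfLE Set.subset_union_right).toHom p.1)
  left_inv := by
    refine SimpleGraph.ConnectedComponent.ind ?_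
    intro u
    simp only [SimpleGraph.ConnectedComponent.lift_mk]
    by_cases hu : (u : V) ∈ S
    · rw [dif_pos hu]
      simp only [Sum.elim_inl, SimpleGraph.ConnectedComponent.map_mk]
      exact congrArg _ (Subtype.ext rfl)
    · rw [dif_neg hu]
      by_cases hc : (G.induce T).connectedComponentMk ⟨u, u.2.resolve_left hu⟩
          = (G.induce T).connectedComponentMk ⟨v, hvT⟩
      · rw [dif_pos hc]
        simp only [Sum.elim_inl, SimpleGraph.ConnectedComponent.map_mk]
        have hr : (G.induce T).Reachable ⟨u, u.2.resolve_left hu⟩ ⟨v, hvT⟩ :=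
          (SimpleGraph.ConnectedComponent.eq).mp hc
        have hr2 := hr.map (G.induceHomOfLE (Set.subset_union_right : T ≤ S ∪ T)).toHom
        exact (SimpleGraph.ConnectedComponent.sound hr2).symm
      · rw [dif_neg hc]
        simp only [Sum.elim_inr, SimpleGraph.ConnectedComponent.map_mk]
        exact congrArg _ (Subtype.ext rfl)
  right_inv := by
    rintro (c | ⟨c, hne⟩)
    · induction c using SimpleGraph.ConnectedComponent.ind with
      | _ s =>
        simp only [Sum.elim_inl, SimpleGraph.ConnectedComponent.map_mk,
          SimpleGraph.ConnectedComponent.lift_mk]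
        split_ifs with h h2
        · exact congrArg _ (congrArg _ (Subtype.ext rfl))
        · exact absurd s.2 h
        · exact absurd s.2 h
    · induction c using SimpleGraph.ConnectedComponent.ind with
      | _ t =>
        simp only [Sum.elim_inr, SimpleGraph.ConnectedComponent.map_mk,
          SimpleGraph.ConnectedComponent.lift_mk]
        split_ifs with h h2
        · exact absurd (congrArg (G.induce T).connectedComponentMk
            (Subtype.ext (show ((t : ↥T) : V) = v from hST _ h t.2))) hne
        · exact absurd ((congrArg (G.induce T).connectedComponentMk
            (Subtype.ext rfl)).trans h2) hne
        · exact congrArg _ (Subtype.ext (congrArg _ (Subtype.ext rfl)))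

lemma nat_card_eq_one_add {α : Type*} [Finite α] (a : α) :
    Nat.card α = 1 + Nat.card {x : α // x ≠ a} := by
  rw [← Nat.card_congr (Equiv.sumCompl (· = a)), Nat.card_sum]
  congr 1
  rw [Nat.card_eq_one_iff_unique]
  exact ⟨⟨fun x y => Subtype.ext (x.2.trans y.2.symm)⟩, ⟨⟨a, rfl⟩⟩⟩

lemma numComponents_union_disjoint [Fintype V] (G : SimpleGraph V) (S T : Set V)
    (hd : ∀ u : V, u ∈ S → u ∈ T → False)
    (he : ∀ u w : V, u ∈ S → w ∈ T → ¬ G.Adj u w) :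
    numComponents (G.induce (S ∪ T))
      = numComponents (G.induce S) + numComponents (G.induce T) := by
  rw [numComponents, Nat.card_congr (unionCompEquiv G S T hd he), Nat.card_sum]
  rfl

lemma numComponents_union_merge [Fintype V] (G : SimpleGraph V) (S T : Set V) (v : V)
    (hvS : v ∈ S) (hvT : v ∈ T) (hST : ∀ u : V, u ∈ S → u ∈ T → u = v)
    (he : ∀ u w : V, G.Adj u w → u ∈ S ∪ T → w ∈ S ∪ T →
      (u ∈ S ∧ w ∈ S) ∨ (u ∈ T ∧ w ∈ T)) :
    numComponents (G.induce (S ∪ T)) + 1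
      = numComponents (G.induce S) + numComponents (G.induce T) := by
  rw [numComponents, Nat.card_congr (mergeCompEquiv G S T v hvS hvT hST he), Nat.card_sum]
  rw [show numComponents (G.induce T)
      = 1 + Nat.card {c : (G.induce T).ConnectedComponent //
          c ≠ (G.induce T).connectedComponentMk ⟨v, hvT⟩} from
    nat_card_eq_one_add _]
  simp only [numComponents]
  omega

end Aux


set_option maxHeartbeats 2000000 in
theorem stmt17 {V : Type*} [Fintype V] (G : SimpleGraph V) (v : V) (A B : Set V)
    (hcover : A ∪ B = Set.univ) (hinter : A ∩ B = {v})
    (hedges : ∀ u w : V, G.Adj u w → (u ∈ A ∧ w ∈ A) ∨ (u ∈ B ∧ w ∈ B))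
    (harti : numComponents G < numComponents (G.induce ({v}ᶜ : Set V)))
    (x y : ℝ) :
    x * y * Q G x y =
      x * y * Q (G.induce (A \ {v})) x y * Q (G.induce (B \ {v})) x y +
        (Q (G.induce A) x y - Q (G.induce (A \ {v})) x y) *
          (Q (G.induce B) x y - Q (G.induce (B \ {v})) x y) := by
  classical
  have hvAB : v ∈ A ∩ B := by rw [hinter]; exact rfl
  have hvA : v ∈ A := hvAB.1
  have hvB : v ∈ B := hvAB.2
  have hABv : ∀ u : V, u ∈ A → u ∈ B → u = v := fun u h1 h2 => by
    have : u ∈ A ∩ B := ⟨h1, h2⟩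
    rwa [hinter] at this
  have hcov : ∀ u : V, u ∈ A ∨ u ∈ B := fun u => (hcover ▸ Set.mem_univ u : u ∈ A ∪ B)
  set F : Finset V → ℝ :=
    fun T => x ^ T.card * y ^ numComponents (G.induce (T : Set V)) with hF
  set Af : Finset V := (A \ {v}).toFinset with hAf
  set Bf : Finset V := (B \ {v}).toFinset with hBf
  set At : Finset V := A.toFinset with hAt
  set Bt : Finset V := B.toFinset with hBt
  have hmemAf : ∀ u : V, u ∈ Af ↔ u ∈ A ∧ u ≠ v := by
    intro u; simp [hAf]
  have hmemBf : ∀ u : V, u ∈ Bf ↔ u ∈ B ∧ u ≠ v := by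
    intro u; simp [hBf]
  have hmemAt : ∀ u : V, u ∈ At ↔ u ∈ A := by intro u; simp [hAt]
  have hmemBt : ∀ u : V, u ∈ Bt ↔ u ∈ B := by intro u; simp [hBt]
  -- union decompositions
  have hunion1 : ∀ T : Finset V, v ∉ T → (T ∩ Af) ∪ (T ∩ Bf) = T := by
    intro T hvT
    ext u
    simp only [Finset.mem_union, Finset.mem_inter, hmemAf, hmemBf]
    constructor
    · rintro (⟨h, _⟩ | ⟨h, _⟩) <;> exact h
    · intro hu
      have huv : u ≠ v := fun h => hvT (h ▸ hu)
      rcases hcov u with h | h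
      · exact Or.inl ⟨hu, h, huv⟩
      · exact Or.inr ⟨hu, h, huv⟩
  have hunion2 : ∀ T : Finset V, (T ∩ At) ∪ (T ∩ Bt) = T := by
    intro T
    ext u
    simp only [Finset.mem_union, Finset.mem_inter, hmemAt, hmemBt]
    constructor
    · rintro (⟨h, _⟩ | ⟨h, _⟩) <;> exact h
    · intro hu
      rcases hcov u with h | h
      · exact Or.inl ⟨hu, h⟩
      · exact Or.inr ⟨hu, h⟩
  -- key pointwise identities
  have key1 : ∀ T : Finset V, v ∉ T → F T = F (T ∩ Af) * F (T ∩ Bf) := by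
    intro T hvT
    have hsetP : ∀ u : V, u ∈ ((T ∩ Af : Finset V) : Set V) ↔ u ∈ (T : Set V) ∧ u ∈ A ∧ u ≠ v := by
      intro u; simp [hmemAf u]
    have hsetQ : ∀ u : V, u ∈ ((T ∩ Bf : Finset V) : Set V) ↔ u ∈ (T : Set V) ∧ u ∈ B ∧ u ≠ v := by
      intro u; simp [hmemBf u]
    have hdisj : Disjoint (T ∩ Af) (T ∩ Bf) := by
      rw [Finset.disjoint_left]
      intro u h1 h2
      rw [Finset.mem_inter, hmemAf] at h1
      rw [Finset.mem_inter, hmemBf] at h2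
      exact h2.2.2 (hABv u h1.2.1 h2.2.1)
    have hcard : T.card = (T ∩ Af).card + (T ∩ Bf).card := by
      rw [← Finset.card_union_of_disjoint hdisj, hunion1 T hvT]
    have hcomp : numComponents (G.induce (T : Set V))
        = numComponents (G.induce ((T ∩ Af : Finset V) : Set V))
          + numComponents (G.induce ((T ∩ Bf : Finset V) : Set V)) := by
      conv_lhs => rw [← hunion1 T hvT]
      rw [Finset.coe_union]
      refine Aux.numComponents_union_disjoint G _ _ ?_ ?_
      · intro u h1 h2
        rw [hsetP] at h1
        rw [hsetQ] at h2
        exact h2.2.2 (hABv u h1.2.1 h2.2.1)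
      · intro u w h1 h2 hadj
        rw [hsetP] at h1
        rw [hsetQ] at h2
        rcases hedges u w hadj with ⟨_, hwA⟩ | ⟨huB, _⟩
        · exact h2.2.2 (hABv w hwA h2.2.1)
        · exact h1.2.2 (hABv u h1.2.1 huB)
    simp only [hF, hcard, hcomp, pow_add]
    ring
  have key2 : ∀ T : Finset V, v ∈ T → x * y * F T = F (T ∩ At) * F (T ∩ Bt) := by
    intro T hvT
    have hsetP : ∀ u : V, u ∈ ((T ∩ At : Finset V) : Set V) ↔ u ∈ (T : Set V) ∧ u ∈ A := by
      intro u; simp [hmemAt u]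
    have hsetQ : ∀ u : V, u ∈ ((T ∩ Bt : Finset V) : Set V) ↔ u ∈ (T : Set V) ∧ u ∈ B := by
      intro u; simp [hmemBt u]
    have hintr : (T ∩ At) ∩ (T ∩ Bt) = {v} := by
      ext u
      simp only [Finset.mem_inter, hmemAt, hmemBt, Finset.mem_singleton]
      constructor
      · rintro ⟨⟨_, hA⟩, _, hB⟩
        exact hABv u hA hB
      · rintro rfl
        exact ⟨⟨hvT, hvA⟩, hvT, hvB⟩
    have hcard : (T ∩ At).card + (T ∩ Bt).card = T.card + 1 := by
      rw [← Finset.card_union_add_card_inter, hunion2 T, hintr, Finset.card_singleton]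
    have hcomp : numComponents (G.induce (T : Set V)) + 1
        = numComponents (G.induce ((T ∩ At : Finset V) : Set V))
          + numComponents (G.induce ((T ∩ Bt : Finset V) : Set V)) := by
      conv_lhs => rw [← hunion2 T]
      rw [Finset.coe_union]
      refine Aux.numComponents_union_merge G _ _ v ?_ ?_ ?_ ?_
      · exact (hsetP v).mpr ⟨hvT, hvA⟩
      · exact (hsetQ v).mpr ⟨hvT, hvB⟩
      · intro u h1 h2
        rw [hsetP] at h1
        rw [hsetQ] at h2
        exact hABv u h1.2 h2.2
      · intro u w hadj hu hw
        have huT : u ∈ (T : Set V) := by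
          rcases hu with h | h
          · exact ((hsetP u).mp h).1
          · exact ((hsetQ u).mp h).1
        have hwT : w ∈ (T : Set V) := by
          rcases hw with h | h
          · exact ((hsetP w).mp h).1
          · exact ((hsetQ w).mp h).1
        rcases hedges u w hadj with ⟨huA, hwA⟩ | ⟨huB, hwB⟩
        · exact Or.inl ⟨(hsetP u).mpr ⟨huT, huA⟩, (hsetP w).mpr ⟨hwT, hwA⟩⟩
        · exact Or.inr ⟨(hsetQ u).mpr ⟨huT, huB⟩, (hsetQ w).mpr ⟨hwT, hwB⟩⟩
    have hxy : x * y * F T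
        = x ^ (T.card + 1) * y ^ (numComponents (G.induce (T : Set V)) + 1) := by
      simp only [hF, pow_succ]
      ring
    rw [hxy, hcomp, ← hcard, pow_add]
    simp only [hF, pow_add]
    ring
  -- splitting the total sum
  have hQG : Q G x y = (∑ T ∈ Finset.univ.filter (fun T : Finset V => v ∈ T), F T)
      + ∑ T ∈ Finset.univ.filter (fun T : Finset V => v ∉ T), F T := by
    rw [Q, ← Finset.sum_filter_add_sum_filter_not Finset.univ (fun T : Finset V => v ∈ T)]
  -- the even (v ∉ T) part
  have heven : ∑ T ∈ Finset.univ.filter (fun T : Finset V => v ∉ T), F T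
      = (∑ P ∈ Af.powerset, F P) * (∑ P ∈ Bf.powerset, F P) := by
    rw [Finset.sum_mul_sum, ← Finset.sum_product']
    refine (Finset.sum_nbij' (fun T => (T ∩ Af, T ∩ Bf)) (fun p => p.1 ∪ p.2)
      ?_ ?_ ?_ ?_ ?_).symm.symm
    · intro T _
      simp only [Finset.mem_product, Finset.mem_powerset]
      exact ⟨Finset.inter_subset_right, Finset.inter_subset_right⟩
    · intro p hp
      simp only [Finset.mem_product, Finset.mem_powerset] at hp
      simp only [Finset.mem_filter, Finset.mem_univ, true_and, Finset.mem_union]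
      rintro (h | h)
      · exact ((hmemAf v).mp (hp.1 h)).2 rfl
      · exact ((hmemBf v).mp (hp.2 h)).2 rfl
    · intro T hT
      simp only [Finset.mem_filter, Finset.mem_univ, true_and] at hT
      exact hunion1 T hT
    · intro p hp
      simp only [Finset.mem_product, Finset.mem_powerset] at hp
      have h1 : (p.1 ∪ p.2) ∩ Af = p.1 := by
        ext u
        simp only [Finset.mem_inter, Finset.mem_union]
        constructor
        · rintro ⟨h | h, hAf'⟩
          · exact h
          · exact absurd (hABv u ((hmemAf u).mp hAf').1 ((hmemBf u).mp (hp.2 h)).1)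
              ((hmemAf u).mp hAf').2
        · intro h
          exact ⟨Or.inl h, hp.1 h⟩
      have h2 : (p.1 ∪ p.2) ∩ Bf = p.2 := by
        ext u
        simp only [Finset.mem_inter, Finset.mem_union]
        constructor
        · rintro ⟨h | h, hBf'⟩
          · exact absurd (hABv u ((hmemAf u).mp (hp.1 h)).1 ((hmemBf u).mp hBf').1)
              ((hmemBf u).mp hBf').2
          · exact h
        · intro h
          exact ⟨Or.inr h, hp.2 h⟩
      exact Prod.ext h1 h2
    · intro T hT
      simp only [Finset.mem_filter, Finset.mem_univ, true_and] at hT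
      exact key1 T hT
  -- the odd (v ∈ T) part
  have hodd : x * y * ∑ T ∈ Finset.univ.filter (fun T : Finset V => v ∈ T), F T
      = (∑ P ∈ At.powerset.filter (fun P => v ∈ P), F P)
        * (∑ P ∈ Bt.powerset.filter (fun P => v ∈ P), F P) := by
    rw [Finset.mul_sum, Finset.sum_mul_sum, ← Finset.sum_product']
    refine Finset.sum_nbij' (fun T => (T ∩ At, T ∩ Bt)) (fun p => p.1 ∪ p.2)
      ?_ ?_ ?_ ?_ ?_
    · intro T hT
      simp only [Finset.mem_filter, Finset.mem_univ, true_and] at hT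
      simp only [Finset.mem_product, Finset.mem_filter, Finset.mem_powerset]
      exact ⟨⟨Finset.inter_subset_right, Finset.mem_inter.mpr ⟨hT, (hmemAt v).mpr hvA⟩⟩,
        ⟨Finset.inter_subset_right, Finset.mem_inter.mpr ⟨hT, (hmemBt v).mpr hvB⟩⟩⟩
    · intro p hp
      simp only [Finset.mem_product, Finset.mem_filter, Finset.mem_powerset] at hp
      simp only [Finset.mem_filter, Finset.mem_univ, true_and, Finset.mem_union]
      exact Or.inl hp.1.2
    · intro T hT
      exact hunion2 T
    · intro p hp
      simp only [Finset.mem_product, Finset.mem_filter, Finset.mem_powerset] at hp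
      have h1 : (p.1 ∪ p.2) ∩ At = p.1 := by
        ext u
        simp only [Finset.mem_inter, Finset.mem_union]
        constructor
        · rintro ⟨h | h, hAt'⟩
          · exact h
          · have : u = v := hABv u ((hmemAt u).mp hAt') ((hmemBt u).mp (hp.2.1 h))
            exact this ▸ hp.1.2
        · intro h
          exact ⟨Or.inl h, hp.1.1 h⟩
      have h2 : (p.1 ∪ p.2) ∩ Bt = p.2 := by
        ext u
        simp only [Finset.mem_inter, Finset.mem_union]
        constructor
        · rintro ⟨h | h, hBt'⟩
          · have : u = v := hABv u ((hmemAt u).mp (hp.1.1 h)) ((hmemBt u).mp hBt')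
            exact this ▸ hp.2.2
          · exact h
        · intro h
          exact ⟨Or.inr h, hp.2.1 h⟩
      exact Prod.ext h1 h2
    · intro T hT
      simp only [Finset.mem_filter, Finset.mem_univ, true_and] at hT
      exact key2 T hT
  -- expressing the Q's on induced graphs
  have hQA : Q (G.induce A) x y = ∑ P ∈ At.powerset, F P := Aux.Q_induce G A x y
  have hQB : Q (G.induce B) x y = ∑ P ∈ Bt.powerset, F P := Aux.Q_induce G B x y
  have hQAd : Q (G.induce (A \ {v})) x y = ∑ P ∈ Af.powerset, F P := Aux.Q_induce G (A \ {v}) x y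
  have hQBd : Q (G.induce (B \ {v})) x y = ∑ P ∈ Bf.powerset, F P := Aux.Q_induce G (B \ {v}) x y
  have hAfeq : Af.powerset = At.powerset.filter (fun P => v ∉ P) := by
    have hAe : Af = At.erase v := by
      rw [hAf, hAt, Set.toFinset_diff, Set.toFinset_singleton, Finset.sdiff_singleton_eq_erase]
    rw [hAe]
    ext P
    simp only [Finset.mem_powerset, Finset.mem_filter, Finset.subset_erase]
  have hBfeq : Bf.powerset = Bt.powerset.filter (fun P => v ∉ P) := by
    have hBe : Bf = Bt.erase v := by
      rw [hBf, hBt, Set.toFinset_diff, Set.toFinset_singleton, Finset.sdiff_singleton_eq_erase]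
    rw [hBe]
    ext P
    simp only [Finset.mem_powerset, Finset.mem_filter, Finset.subset_erase]
  have hdiffA : Q (G.induce A) x y - Q (G.induce (A \ {v})) x y
      = ∑ P ∈ At.powerset.filter (fun P => v ∈ P), F P := by
    rw [hQA, hQAd, hAfeq, ← Finset.sum_filter_add_sum_filter_not At.powerset (fun P => v ∈ P) F]
    ring
  have hdiffB : Q (G.induce B) x y - Q (G.induce (B \ {v})) x y
      = ∑ P ∈ Bt.powerset.filter (fun P => v ∈ P), F P := by
    rw [hQB, hQBd, hBfeq, ← Finset.sum_filter_add_sum_filter_not Bt.powerset (fun P => v ∈ P) F]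
    ring
  rw [hQG, hdiffA, hdiffB, hQAd, hQBd, mul_add, hodd, heven]
  ring
end
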